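/- Let (G';C') be an instance in which u and u' are twin vertices (N'⟨u⟩ = N'⟨u'⟩, u ≠ u'), let G = G' − u' (the graph obtained from G' by deleting u') and C = C' ∖ {u'}, let n = |V(G)|, and let m ≥ 3 be a common positive integer used to build the polytopes P (for (G;C)) and P' (for (G';C')), both as convex hulls of feasible 0/1 pairs with m steps. Suppose π^x·x + π^y·y ≤ π₀ is valid for P and π^x_{u,j} ≥ 0 for all j = 1,…,m. Then the two inequalities on ℝ^{V'×{1,…,m}} × ℝ^{V'×{1,…,m}} (V' = V(G')) obtained from π by: (16) keeping all coefficients of π, assigning coefficient 0 to every variable x_{u',j} and coefficient π^y_{u,j} to every variable y_{u',j}; and (17) the same but with the x-coefficients of u and u' swapped (coefficient π^x_{u,j} on x_{u',j} and 0 on x_{u,j}), are both valid for P'. Moreover, if additionally G is connected with at least 3 vertices, (G;C) is twin free, π^x·x + π^y·y ≤ π₀ is facet-defining for P, and π₀ ≠ 0, then (16) and (17) are facet-defining for P' (i.e., the corresponding faces of P' have affine dimension 2m(n+1) − 1). -/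

import Mathlib

open Finset

namespace LegalSeq

variable {V : Type*}

/-- The generalized neighborhood `N⟨v⟩`: the closed neighborhood of `v` if `v ∈ C`,
the open neighborhood otherwise. -/
noncomputable def gN [Fintype V] (G : SimpleGraph V) (C : Set V) (v : V) : Finset V := by
  classical
  exact (Set.toFinite (if v ∈ C then insert v (G.neighborSet v) else G.neighborSet v)).toFinset

/-- The ambient space `ℝ^{V×{1,…,m}} × ℝ^{V×{1,…,m}}` of the polytope of legal sequences. -/
abbrev Pt (V : Type*) (m : ℕ) := (V × Fin m → ℝ) × (V × Fin m → ℝ)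

/-- Feasible 0/1 pairs `(x, y)` of the formulation `F₁` (constraints (1)-(5)). -/
def Feasible [Fintype V] (G : SimpleGraph V) (C : Set V) (m : ℕ) : Set (Pt V m) :=
  { p | (∀ q, p.1 q = 0 ∨ p.1 q = 1) ∧ (∀ q, p.2 q = 0 ∨ p.2 q = 1) ∧
    (∀ i : Fin m, ∑ v : V, p.2 (v, i) ≤ 1) ∧
    (∀ v : V, ∑ i : Fin m, p.2 (v, i) ≤ 1) ∧
    (∀ (v : V) (i : Fin m) (h : i.1 + 1 < m),
        p.2 (v, ⟨i.1 + 1, h⟩) ≤ ∑ u ∈ gN G C v, (p.1 (u, i) - p.1 (u, ⟨i.1 + 1, h⟩))) ∧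
    (∀ (u : V) (i : Fin m), p.1 (u, i) + ∑ v ∈ gN G C u, p.2 (v, i) ≤ 1) ∧
    (∀ (u : V) (i : Fin m) (h : i.1 + 1 < m), p.1 (u, ⟨i.1 + 1, h⟩) ≤ p.1 (u, i)) }

/-- The polytope of legal sequences: the convex hull of the feasible 0/1 pairs. -/
noncomputable def poly [Fintype V] (G : SimpleGraph V) (C : Set V) (m : ℕ) : Set (Pt V m) :=
  convexHull ℝ (Feasible G C m)

/-- `δ(G;C)`, the minimum cardinality of a generalized neighborhood. -/
noncomputable def gdelta [Fintype V] (G : SimpleGraph V) (C : Set V) : ℕ :=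
  sInf (Set.range fun v : V => (gN G C v).card)

/-- The instance `(G;C)` is twin free if distinct vertices have distinct
generalized neighborhoods. -/
def TwinFree [Fintype V] (G : SimpleGraph V) (C : Set V) : Prop :=
  ∀ u v : V, u ≠ v → gN G C u ≠ gN G C v

/-- The inequality `f p ≤ a` is valid for the polytope and the face it defines has affine
dimension `2nm - 1`, i.e. it is facet-defining. -/
def IsFacet [Fintype V] (G : SimpleGraph V) (C : Set V) (m : ℕ)
    (f : Pt V m → ℝ) (a : ℝ) : Prop :=
  (∀ p ∈ poly G C m, f p ≤ a) ∧
  Module.finrank ℝ ((affineSpan ℝ {p ∈ poly G C m | f p = a}).direction) =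
    2 * Fintype.card V * m - 1

/-- The graph `G' − u'` obtained by deleting the vertex `u'`. -/
def delVert {V' : Type*} (G' : SimpleGraph V') (u' : V') :
    SimpleGraph {w : V' // w ≠ u'} :=
  G'.comap Subtype.val

/-- The set `C' ∖ {u'}`, viewed inside the vertex set of `G' − u'`. -/
def delSet {V' : Type*} (C' : Set V') (u' : V') : Set {w : V' // w ≠ u'} :=
  {w : {w : V' // w ≠ u'} | (w : V') ∈ C'}



section Aux

variable {V : Type*}

lemma mem_gN [Fintype V] {G : SimpleGraph V} {C : Set V} {v w : V} :
    w ∈ gN G C v ↔ G.Adj v w ∨ (w = v ∧ v ∈ C) := by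
  classical
  unfold gN
  rw [Set.Finite.mem_toFinset]
  by_cases h : v ∈ C <;> simp [h, SimpleGraph.mem_neighborSet] <;> tauto

lemma gN_symm [Fintype V] {G : SimpleGraph V} {C : Set V} {v w : V} :
    w ∈ gN G C v ↔ v ∈ gN G C w := by
  simp only [mem_gN]
  constructor
  · rintro (h | ⟨rfl, h⟩)
    · exact Or.inl h.symm
    · exact Or.inr ⟨rfl, h⟩
  · rintro (h | ⟨rfl, h⟩)
    · exact Or.inl h.symm
    · exact Or.inr ⟨rfl, h⟩

/-- Generic sum-splitting helper. -/
lemma sum_erase_split [DecidableEq V] (S : Finset V) (a : V) (F : V → ℝ) :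
    ∑ v ∈ S, F v = (∑ v ∈ S.erase a, F v) + (if a ∈ S then F a else 0) := by
  by_cases ha : a ∈ S
  · rw [if_pos ha, Finset.sum_erase_add S F ha]
  · rw [if_neg ha, Finset.erase_eq_of_notMem ha, add_zero]

lemma sum_eq_update [DecidableEq V] (S : Finset V) (a : V) (F G : V → ℝ)
    (hfg : ∀ x ∈ S, x ≠ a → F x = G x) :
    ∑ x ∈ S, F x = (∑ x ∈ S, G x) + (if a ∈ S then F a - G a else 0) := by
  rw [sum_erase_split S a F, sum_erase_split S a G]
  have : ∑ v ∈ S.erase a, F v = ∑ v ∈ S.erase a, G v :=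
    Finset.sum_congr rfl fun x hx => hfg x (Finset.mem_of_mem_erase hx)
      (Finset.ne_of_mem_erase hx)
  rw [this]
  by_cases ha : a ∈ S <;> simp [ha] <;> ring

section FeasibleFacts

variable [Fintype V] {G : SimpleGraph V} {C : Set V} {m : ℕ} {p : Pt V m}

lemma x_nonneg (hp : p ∈ Feasible G C m) (q : V × Fin m) : 0 ≤ p.1 q := by
  rcases hp.1 q with h | h <;> simp [h]

lemma x_le_one (hp : p ∈ Feasible G C m) (q : V × Fin m) : p.1 q ≤ 1 := by
  rcases hp.1 q with h | h <;> simp [h]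

lemma y_nonneg (hp : p ∈ Feasible G C m) (q : V × Fin m) : 0 ≤ p.2 q := by
  rcases hp.2.1 q with h | h <;> simp [h]

lemma y_le_one (hp : p ∈ Feasible G C m) (q : V × Fin m) : p.2 q ≤ 1 := by
  rcases hp.2.1 q with h | h <;> simp [h]

lemma x_mono (hp : p ∈ Feasible G C m) (w : V) {i i' : Fin m} (h : i ≤ i') :
    p.1 (w, i') ≤ p.1 (w, i) := by
  have h5 := hp.2.2.2.2.2.2
  have key : ∀ k (hk : i.1 + k < m), p.1 (w, ⟨i.1 + k, hk⟩) ≤ p.1 (w, i) := by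
    intro k
    induction k with
    | zero => intro hk; simp
    | succ k ih =>
        intro hk
        have hk' : i.1 + k < m := by omega
        have := h5 w ⟨i.1 + k, hk'⟩ (by omega)
        exact le_trans this (ih hk')
  have hi' : i' = ⟨i.1 + (i'.1 - i.1), by omega⟩ := by
    apply Fin.ext; simp; omega
  rw [hi']
  exact key _ _

lemma pair_le_sum [DecidableEq V] (hp : p ∈ Feasible G C m) {a b : V} (hab : a ≠ b)
    (i : Fin m) : p.2 (a, i) + p.2 (b, i) ≤ ∑ v : V, p.2 (v, i) := by
  have h := Finset.sum_le_sum_of_subset_of_nonneg (Finset.subset_univ {a, b})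
    (fun v _ _ => y_nonneg hp (v, i))
  rwa [Finset.sum_pair hab] at h

end FeasibleFacts

end Aux


section Aux2

variable {V' : Type*} [Fintype V'] [DecidableEq V'] {G' : SimpleGraph V'} {C' : Set V'}
  {u u' : V'}

lemma twin_mem_iff (htwin : gN G' C' u = gN G' C' u') (w : V') :
    u ∈ gN G' C' w ↔ u' ∈ gN G' C' w := by
  rw [gN_symm (v := w), gN_symm (v := w) (w := u'), htwin]

lemma mem_gN_del {v w : {w : V' // w ≠ u'}} :
    w ∈ gN (delVert G' u') (delSet C' u') v ↔ (w : V') ∈ gN G' C' (v : V') := by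
  simp only [mem_gN, delVert, delSet, SimpleGraph.comap_adj, Set.mem_setOf_eq,
    Subtype.ext_iff]

lemma sum_gN_del (v : {w : V' // w ≠ u'}) (f : V' → ℝ) :
    ∑ w ∈ gN (delVert G' u') (delSet C' u') v, f w.val
      = ∑ w ∈ (gN G' C' (v : V')).erase u', f w := by
  have himg : (gN G' C' (v : V')).erase u'
      = Finset.image Subtype.val (gN (delVert G' u') (delSet C' u') v) := by
    ext w
    simp only [Finset.mem_erase, Finset.mem_image]
    constructor
    · rintro ⟨h1, h2⟩
      exact ⟨⟨w, h1⟩, mem_gN_del.2 h2, rfl⟩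
    · rintro ⟨a, ha, rfl⟩
      exact ⟨a.2, mem_gN_del.1 ha⟩
  rw [himg, Finset.sum_image (fun x _ y _ h => Subtype.ext h)]

/-- Master bridge: a sum over `N'⟨w⟩` equals the corresponding sum over the
generalized neighborhood in the deleted graph plus the `u'` term. -/
lemma sum_gN_split (w : V') (hw : w ≠ u') (F : V' → ℝ) :
    ∑ v ∈ gN G' C' w, F v
      = (∑ v ∈ gN (delVert G' u') (delSet C' u') ⟨w, hw⟩, F v.val)
        + (if u' ∈ gN G' C' w then F u' else 0) := by
  rw [sum_gN_del]
  exact sum_erase_split _ _ _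

lemma sum_split_univ (u' : V') (g : V' → ℝ) :
    ∑ v : V', g v = g u' + ∑ v : {w : V' // w ≠ u'}, g v.val := by
  rw [← Finset.sum_erase_add _ _ (Finset.mem_univ u'), add_comm]
  congr 1
  have h : ∀ x : V', x ∈ Finset.univ.erase u' ↔ x ≠ u' := fun x => by simp
  exact Finset.sum_subtype _ h g

variable {m : ℕ} {p : Pt V' m}

lemma not_two_plays (hp : p ∈ Feasible G' C' m) {a b : V'} (hab : a ≠ b)
    (hN : gN G' C' a = gN G' C' b) {i i' : Fin m} (hii : i ≤ i')
    (h1 : p.2 (a, i) = 1) (h2 : p.2 (b, i') = 1) : False := by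
  rcases eq_or_lt_of_le hii with rfl | hlt
  · have hps := pair_le_sum hp hab i
    rw [h1, h2] at hps
    have := le_trans hps (hp.2.2.1 i)
    norm_num at this
  · have hi1 : 1 ≤ i'.1 := by
      have : i.1 < i'.1 := hlt
      omega
    set i'' : Fin m := ⟨i'.1 - 1, by omega⟩ with hi''
    have h3 : p.2 (b, i') ≤ ∑ w ∈ gN G' C' b, (p.1 (w, i'') - p.1 (w, i')) := by
      have h3 := hp.2.2.2.2.1 b i'' (by simp [hi'']; omega)
      have heq : (⟨i''.1 + 1, by simp [hi'']; omega⟩ : Fin m) = i' := by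
        apply Fin.ext; simp [hi'']; omega
      rwa [heq] at h3
    rw [h2] at h3
    have hex : ∃ w ∈ gN G' C' b, 0 < p.1 (w, i'') - p.1 (w, i') := by
      by_contra hno
      push_neg at hno
      have := Finset.sum_nonpos hno
      linarith
    obtain ⟨w, hw, hdiff⟩ := hex
    have hx1 : p.1 (w, i'') = 1 := by
      rcases hp.1 (w, i'') with h0 | h0
      · have := x_nonneg hp (w, i'); rw [h0] at hdiff; linarith
      · exact h0
    have hxi : p.1 (w, i) = 1 := by
      have hle : i ≤ i'' := by
        rw [Fin.le_def]; simp [hi'']; omega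
      have := x_mono hp w hle
      rw [hx1] at this
      have := x_le_one hp (w, i)
      linarith
    have hamem : a ∈ gN G' C' w := by
      rw [← gN_symm]
      rw [← hN] at hw
      exact gN_symm.1 (gN_symm.2 hw)
    have h4 := hp.2.2.2.2.2.1 w i
    have hsingle : p.2 (a, i) ≤ ∑ v ∈ gN G' C' w, p.2 (v, i) :=
      Finset.single_le_sum (fun v _ => y_nonneg hp (v, i)) hamem
    rw [h1] at hsingle
    rw [hxi] at h4
    linarith

lemma plays_le_one (hp : p ∈ Feasible G' C' m) (hab : u ≠ u')
    (hN : gN G' C' u = gN G' C' u') :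
    (∑ i : Fin m, p.2 (u, i)) + (∑ i : Fin m, p.2 (u', i)) ≤ 1 := by
  by_cases hA : ∀ i : Fin m, p.2 (u, i) = 0
  · have : ∑ i : Fin m, p.2 (u, i) = 0 := Finset.sum_eq_zero fun i _ => hA i
    rw [this, zero_add]
    exact hp.2.2.2.1 u'
  · push_neg at hA
    obtain ⟨i₀, hi₀⟩ := hA
    have hi₀1 : p.2 (u, i₀) = 1 := by rcases hp.2.1 (u, i₀) with h | h; exact absurd h hi₀; exact h
    have hB : ∀ i' : Fin m, p.2 (u', i') = 0 := by
      intro i'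
      rcases hp.2.1 (u', i') with h | h
      · exact h
      · exfalso
        rcases le_total i₀ i' with hle | hle
        · exact not_two_plays hp hab hN hle hi₀1 h
        · exact not_two_plays hp (Ne.symm hab) hN.symm hle h hi₀1
    have : ∑ i : Fin m, p.2 (u', i) = 0 := Finset.sum_eq_zero fun i _ => hB i
    rw [this, add_zero]
    exact hp.2.2.2.1 u

end Aux2

section Lifts

variable {V' : Type*} [DecidableEq V'] {m : ℕ}

/-- Lift a point of the deleted instance, copying the first `j` x-entries of `u`
onto `u'` and putting `0` in the y-entries of `u'`. -/
def liftX (u u' : V') (hne : u ≠ u') (j : ℕ) (p : Pt {w : V' // w ≠ u'} m) : Pt V' m :=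
  (fun q => if h : q.1 ≠ u' then p.1 (⟨q.1, h⟩, q.2)
            else if q.2.1 < j then p.1 (⟨u, hne⟩, q.2) else 0,
   fun q => if h : q.1 ≠ u' then p.2 (⟨q.1, h⟩, q.2) else 0)

/-- Lift a point of the deleted instance, moving the y-entry of `u` at step `j`
to `u'`, with zero x-entries on `u'`. -/
def liftY (u u' : V') (hne : u ≠ u') (j : Fin m) (p : Pt {w : V' // w ≠ u'} m) : Pt V' m :=
  (fun q => if h : q.1 ≠ u' then p.1 (⟨q.1, h⟩, q.2) else 0,
   fun q => if h : q.1 ≠ u' then (if q.1 = u ∧ q.2 = j then 0 else p.2 (⟨q.1, h⟩, q.2))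
            else if q.2 = j then p.2 (⟨u, hne⟩, j) else 0)

/-- Project a point of the instance `(G';C')` to the deleted instance, taking max of the
x-entries and sum of the y-entries of the twins `u, u'`. -/
def resMap (u u' : V') (p : Pt V' m) : Pt {w : V' // w ≠ u'} m :=
  (fun q => if (q.1 : V') = u then max (p.1 (u, q.2)) (p.1 (u', q.2)) else p.1 (q.1.val, q.2),
   fun q => if (q.1 : V') = u then p.2 (u, q.2) + p.2 (u', q.2) else p.2 (q.1.val, q.2))

/-- Swap the coordinates of `u` and `u'`. -/
def swapMap (u u' : V') (p : Pt V' m) : Pt V' m :=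
  (fun q => p.1 (Equiv.swap u u' q.1, q.2), fun q => p.2 (Equiv.swap u u' q.1, q.2))

variable {u u' : V'} (hne : u ≠ u')

@[simp] lemma liftX_x_ne (j : ℕ) (p : Pt {w : V' // w ≠ u'} m) (v : V') (hv : v ≠ u')
    (i : Fin m) : (liftX u u' hne j p).1 (v, i) = p.1 (⟨v, hv⟩, i) := by
  simp [liftX, hv]

@[simp] lemma liftX_x_val (j : ℕ) (p : Pt {w : V' // w ≠ u'} m) (v : {w : V' // w ≠ u'})
    (i : Fin m) : (liftX u u' hne j p).1 (v.val, i) = p.1 (v, i) := by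
  simp [liftX, v.2]

@[simp] lemma liftX_x_u' (j : ℕ) (p : Pt {w : V' // w ≠ u'} m) (i : Fin m) :
    (liftX u u' hne j p).1 (u', i) = if i.1 < j then p.1 (⟨u, hne⟩, i) else 0 := by
  simp [liftX]

@[simp] lemma liftX_y_ne (j : ℕ) (p : Pt {w : V' // w ≠ u'} m) (v : V') (hv : v ≠ u')
    (i : Fin m) : (liftX u u' hne j p).2 (v, i) = p.2 (⟨v, hv⟩, i) := by
  simp [liftX, hv]

@[simp] lemma liftX_y_val (j : ℕ) (p : Pt {w : V' // w ≠ u'} m) (v : {w : V' // w ≠ u'})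
    (i : Fin m) : (liftX u u' hne j p).2 (v.val, i) = p.2 (v, i) := by
  simp [liftX, v.2]

@[simp] lemma liftX_y_u' (j : ℕ) (p : Pt {w : V' // w ≠ u'} m) (i : Fin m) :
    (liftX u u' hne j p).2 (u', i) = 0 := by
  simp [liftX]

@[simp] lemma liftY_x_ne (j : Fin m) (p : Pt {w : V' // w ≠ u'} m) (v : V') (hv : v ≠ u')
    (i : Fin m) : (liftY u u' hne j p).1 (v, i) = p.1 (⟨v, hv⟩, i) := by
  simp [liftY, hv]

@[simp] lemma liftY_x_val (j : Fin m) (p : Pt {w : V' // w ≠ u'} m) (v : {w : V' // w ≠ u'})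
    (i : Fin m) : (liftY u u' hne j p).1 (v.val, i) = p.1 (v, i) := by
  simp [liftY, v.2]

@[simp] lemma liftY_x_u' (j : Fin m) (p : Pt {w : V' // w ≠ u'} m) (i : Fin m) :
    (liftY u u' hne j p).1 (u', i) = 0 := by
  simp [liftY]

@[simp] lemma liftY_y_ne (j : Fin m) (p : Pt {w : V' // w ≠ u'} m) (v : V') (hv : v ≠ u')
    (i : Fin m) : (liftY u u' hne j p).2 (v, i)
      = if v = u ∧ i = j then 0 else p.2 (⟨v, hv⟩, i) := by
  simp [liftY, hv]

@[simp] lemma liftY_y_u' (j : Fin m) (p : Pt {w : V' // w ≠ u'} m) (i : Fin m) :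
    (liftY u u' hne j p).2 (u', i) = if i = j then p.2 (⟨u, hne⟩, j) else 0 := by
  simp [liftY]

end Lifts

section LiftFeas

variable {V' : Type*} [Fintype V'] [DecidableEq V'] {G' : SimpleGraph V'} {C' : Set V'}
  {u u' : V'} {m : ℕ} {p : Pt {w : V' // w ≠ u'} m}

lemma liftX_feasible (hne : u ≠ u') (htwin : gN G' C' u = gN G' C' u')
    (hp : p ∈ Feasible (delVert G' u') (delSet C' u') m) (j : ℕ) :
    liftX u u' hne j p ∈ Feasible G' C' m := by
  have hc1 := hp.2.2.1
  have hc2 := hp.2.2.2.1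
  have hc3 := hp.2.2.2.2.1
  have hc4 := hp.2.2.2.2.2.1
  have hc5 := hp.2.2.2.2.2.2
  have lmono : ∀ (w : V') (i : Fin m) (h : i.1 + 1 < m),
      (liftX u u' hne j p).1 (w, ⟨i.1 + 1, h⟩) ≤ (liftX u u' hne j p).1 (w, i) := by
    intro w i h
    by_cases hw : w = u'
    · rw [hw]
      rw [liftX_x_u', liftX_x_u']
      split_ifs with h1 h2 h2
      · exact hc5 _ i h
      · simp at h1; omega
      · exact x_nonneg hp _
      · exact le_refl 0
    · rw [liftX_x_ne hne j p w hw, liftX_x_ne hne j p w hw]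
      exact hc5 ⟨w, hw⟩ i h
  refine ⟨?_, ?_, ?_, ?_, ?_, ?_, fun w i h => lmono w i h⟩
  · rintro ⟨v, i⟩
    by_cases hv : v = u'
    · rw [hv]; rw [liftX_x_u']
      split_ifs
      · exact hp.1 _
      · exact Or.inl rfl
    · rw [liftX_x_ne hne j p v hv]; exact hp.1 _
  · rintro ⟨v, i⟩
    by_cases hv : v = u'
    · rw [hv]; rw [liftX_y_u']; exact Or.inl rfl
    · rw [liftX_y_ne hne j p v hv]; exact hp.2.1 _
  · intro i
    rw [sum_split_univ u' (fun v => (liftX u u' hne j p).2 (v, i))]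
    simp only [liftX_y_u', liftX_y_val]
    simpa using hc1 i
  · intro v
    by_cases hv : v = u'
    · rw [hv]
      simp only [liftX_y_u']
      simp
    · simp only [liftX_y_ne hne j p v hv]
      exact hc2 _
  · intro v i h
    by_cases hv : v = u'
    · rw [hv]
      rw [liftX_y_u']
      exact Finset.sum_nonneg fun w _ => sub_nonneg.2 (lmono w i h)
    · rw [liftX_y_ne hne j p v hv, sum_gN_split v hv]
      simp only [liftX_x_val]
      have h3 := hc3 ⟨v, hv⟩ i h
      have hpos : (0:ℝ) ≤ (if u' ∈ gN G' C' v then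
          (liftX u u' hne j p).1 (u', i) - (liftX u u' hne j p).1 (u', ⟨i.1+1, h⟩) else 0) := by
        split_ifs
        · exact sub_nonneg.2 (lmono u' i h)
        · exact le_refl 0
      linarith
  · intro w i
    by_cases hw : w = u'
    · rw [hw]
      have hx : (liftX u u' hne j p).1 (u', i) ≤ p.1 (⟨u, hne⟩, i) := by
        rw [liftX_x_u']; split_ifs
        · exact le_refl _
        · exact x_nonneg hp _
      rw [show gN G' C' u' = gN G' C' u from htwin.symm, sum_gN_split u hne]
      simp only [liftX_y_u', liftX_y_val, ite_self, add_zero]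
      have h4 := hc4 ⟨u, hne⟩ i
      linarith
    · rw [liftX_x_ne hne j p w hw, sum_gN_split w hw]
      simp only [liftX_y_u', liftX_y_val, ite_self, add_zero]
      exact hc4 ⟨w, hw⟩ i

end LiftFeas

section LiftFeasY

variable {V' : Type*} [Fintype V'] [DecidableEq V'] {G' : SimpleGraph V'} {C' : Set V'}
  {u u' : V'} {m : ℕ} {p : Pt {w : V' // w ≠ u'} m}

@[simp] lemma liftY_y_val (hne : u ≠ u') (j : Fin m) (p : Pt {w : V' // w ≠ u'} m)
    (v : {w : V' // w ≠ u'}) (i : Fin m) :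
    (liftY u u' hne j p).2 (v.val, i)
      = if v = ⟨u, hne⟩ ∧ i = j then 0 else p.2 (v, i) := by
  simp [liftY, v.2, Subtype.ext_iff]

lemma liftY_feasible (hne : u ≠ u') (htwin : gN G' C' u = gN G' C' u')
    (hp : p ∈ Feasible (delVert G' u') (delSet C' u') m) (j : Fin m) :
    liftY u u' hne j p ∈ Feasible G' C' m := by
  have hc1 := hp.2.2.1
  have hc2 := hp.2.2.2.1
  have hc3 := hp.2.2.2.2.1
  have hc4 := hp.2.2.2.2.2.1
  have hc5 := hp.2.2.2.2.2.2
  have lmono : ∀ (w : V') (i : Fin m) (h : i.1 + 1 < m),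
      (liftY u u' hne j p).1 (w, ⟨i.1 + 1, h⟩) ≤ (liftY u u' hne j p).1 (w, i) := by
    intro w i h
    by_cases hw : w = u'
    · rw [hw, liftY_x_u', liftY_x_u']
    · rw [liftY_x_ne hne j p w hw, liftY_x_ne hne j p w hw]
      exact hc5 ⟨w, hw⟩ i h
  refine ⟨?_, ?_, ?_, ?_, ?_, ?_, fun w i h => lmono w i h⟩
  · rintro ⟨v, i⟩
    by_cases hv : v = u'
    · rw [hv, liftY_x_u']; exact Or.inl rfl
    · rw [liftY_x_ne hne j p v hv]; exact hp.1 _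
  · rintro ⟨v, i⟩
    by_cases hv : v = u'
    · rw [hv, liftY_y_u']
      split_ifs
      · exact hp.2.1 _
      · exact Or.inl rfl
    · rw [liftY_y_ne hne j p v hv]
      split_ifs
      · exact Or.inl rfl
      · exact hp.2.1 _
  · intro i
    rw [sum_split_univ u' (fun v => (liftY u u' hne j p).2 (v, i))]
    simp only [liftY_y_u', liftY_y_val]
    have hupd := sum_eq_update (Finset.univ : Finset {w : V' // w ≠ u'}) ⟨u, hne⟩
      (fun v => if v = ⟨u, hne⟩ ∧ i = j then 0 else p.2 (v, i)) (fun v => p.2 (v, i))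
      (fun x _ hx => by simp [hx])
    rw [hupd]
    simp only [Finset.mem_univ, if_true, true_and]
    by_cases hij : i = j
    · rw [hij]
      simp only [if_pos rfl, if_true]
      have := hc1 j
      linarith
    · simp only [if_neg hij]
      have := hc1 i
      linarith
  · intro v
    by_cases hv : v = u'
    · rw [hv]
      simp only [liftY_y_u']
      rw [Finset.sum_ite_eq' Finset.univ j (fun _ => p.2 (⟨u, hne⟩, j))]
      simp only [Finset.mem_univ, if_true]
      exact y_le_one hp _
    · simp only [liftY_y_ne hne j p v hv]
      refine le_trans (Finset.sum_le_sum fun i _ => ?_) (hc2 ⟨v, hv⟩)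
      split_ifs
      · exact y_nonneg hp _
      · exact le_refl _
  · intro v i h
    by_cases hv : v = u'
    · rw [hv, liftY_y_u']
      by_cases hj : (⟨i.1 + 1, h⟩ : Fin m) = j
      · rw [if_pos hj, ← hj]
        rw [show gN G' C' u' = gN G' C' u from htwin.symm, sum_gN_split u hne]
        simp only [liftY_x_val, liftY_x_u', sub_zero, sub_self, ite_self, add_zero]
        exact hc3 ⟨u, hne⟩ i h
      · rw [if_neg hj]
        exact Finset.sum_nonneg fun w _ => sub_nonneg.2 (lmono w i h)
    · rw [liftY_y_ne hne j p v hv]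
      by_cases hcond : v = u ∧ (⟨i.1 + 1, h⟩ : Fin m) = j
      · rw [if_pos hcond]
        exact Finset.sum_nonneg fun w _ => sub_nonneg.2 (lmono w i h)
      · rw [if_neg hcond, sum_gN_split v hv]
        simp only [liftY_x_val, liftY_x_u', sub_self, ite_self, add_zero]
        exact hc3 ⟨v, hv⟩ i h
  · intro w i
    by_cases hij : i = j
    · rw [hij]
      by_cases hw : w = u'
      · rw [hw, liftY_x_u', show gN G' C' u' = gN G' C' u from htwin.symm,
          sum_gN_split u hne]
        simp only [liftY_y_val, liftY_y_u', if_pos rfl, and_true]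
        have hupd := sum_eq_update (gN (delVert G' u') (delSet C' u') ⟨u, hne⟩) ⟨u, hne⟩
          (fun v => if v = ⟨u, hne⟩ then 0 else p.2 (v, j)) (fun v => p.2 (v, j))
          (fun x _ hx => by simp [hx])
        rw [hupd]
        have hmm : (⟨u, hne⟩ : {w : V' // w ≠ u'}) ∈ gN (delVert G' u') (delSet C' u') ⟨u, hne⟩
            ↔ u' ∈ gN G' C' u := by
          rw [mem_gN_del]; exact twin_mem_iff htwin u
        by_cases hcc : u' ∈ gN G' C' u
        · rw [if_pos (hmm.2 hcc), if_pos hcc]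
          have h4 := hc4 ⟨u, hne⟩ j
          have := x_nonneg hp (⟨u, hne⟩, j)
          simp only [if_pos rfl, if_true]
          linarith
        · rw [if_neg (fun hm => hcc (hmm.1 hm)), if_neg hcc]
          have h4 := hc4 ⟨u, hne⟩ j
          have := x_nonneg hp (⟨u, hne⟩, j)
          linarith
      · rw [liftY_x_ne hne j p w hw, sum_gN_split w hw]
        simp only [liftY_y_val, liftY_y_u', if_pos rfl, and_true]
        have hupd := sum_eq_update (gN (delVert G' u') (delSet C' u') ⟨w, hw⟩) ⟨u, hne⟩
          (fun v => if v = ⟨u, hne⟩ then 0 else p.2 (v, j)) (fun v => p.2 (v, j))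
          (fun x _ hx => by simp [hx])
        rw [hupd]
        have hmm : (⟨u, hne⟩ : {w : V' // w ≠ u'}) ∈ gN (delVert G' u') (delSet C' u') ⟨w, hw⟩
            ↔ u' ∈ gN G' C' w := by
          rw [mem_gN_del]; exact twin_mem_iff htwin w
        by_cases hcc : u' ∈ gN G' C' w
        · rw [if_pos (hmm.2 hcc), if_pos hcc]
          have h4 := hc4 ⟨w, hw⟩ j
          simp only [if_pos rfl, if_true]
          linarith
        · rw [if_neg (fun hm => hcc (hmm.1 hm)), if_neg hcc]
          have h4 := hc4 ⟨w, hw⟩ j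
          linarith
    · have hyv : ∀ v : {w : V' // w ≠ u'}, (liftY u u' hne j p).2 (v.val, i) = p.2 (v, i) := by
        intro v
        rw [liftY_y_val, if_neg]
        rintro ⟨-, h2⟩
        exact hij h2
      by_cases hw : w = u'
      · rw [hw, liftY_x_u', show gN G' C' u' = gN G' C' u from htwin.symm,
          sum_gN_split u hne, Finset.sum_congr rfl (fun v _ => hyv v),
          liftY_y_u', if_neg hij, ite_self, add_zero]
        have h4 := hc4 ⟨u, hne⟩ i
        have := x_nonneg hp (⟨u, hne⟩, i)
        linarith
      · rw [liftY_x_ne hne j p w hw, sum_gN_split w hw,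
          Finset.sum_congr rfl (fun v _ => hyv v), liftY_y_u', if_neg hij, ite_self, add_zero]
        exact hc4 ⟨w, hw⟩ i

end LiftFeasY

section ResFeas

variable {V' : Type*} [Fintype V'] [DecidableEq V'] {G' : SimpleGraph V'} {C' : Set V'}
  {u u' : V'} {m : ℕ} {p' : Pt V' m}

lemma resMap_x_pos (p' : Pt V' m) (v : {w : V' // w ≠ u'}) (hvu : (v : V') = u) (i : Fin m) :
    (resMap u u' p').1 (v, i) = max (p'.1 (u, i)) (p'.1 (u', i)) := by simp [resMap, hvu]

lemma resMap_x_neg (p' : Pt V' m) (v : {w : V' // w ≠ u'}) (hvu : (v : V') ≠ u) (i : Fin m) :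
    (resMap u u' p').1 (v, i) = p'.1 (v.val, i) := by simp [resMap, hvu]

lemma resMap_y_pos (p' : Pt V' m) (v : {w : V' // w ≠ u'}) (hvu : (v : V') = u) (i : Fin m) :
    (resMap u u' p').2 (v, i) = p'.2 (u, i) + p'.2 (u', i) := by simp [resMap, hvu]

lemma resMap_y_neg (p' : Pt V' m) (v : {w : V' // w ≠ u'}) (hvu : (v : V') ≠ u) (i : Fin m) :
    (resMap u u' p').2 (v, i) = p'.2 (v.val, i) := by simp [resMap, hvu]

lemma resMap_feasible (hne : u ≠ u') (htwin : gN G' C' u = gN G' C' u')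
    (hp : p' ∈ Feasible G' C' m) :
    resMap u u' p' ∈ Feasible (delVert G' u') (delSet C' u') m := by
  have hc1 := hp.2.2.1
  have hc3 := hp.2.2.2.2.1
  have hc4 := hp.2.2.2.2.2.1
  have qmono : ∀ (w : {w : V' // w ≠ u'}) (i : Fin m) (h : i.1 + 1 < m),
      (resMap u u' p').1 (w, ⟨i.1 + 1, h⟩) ≤ (resMap u u' p').1 (w, i) := by
    intro w i h
    have hle : i ≤ (⟨i.1 + 1, h⟩ : Fin m) := by rw [Fin.le_def]; simp
    by_cases hvu : (w : V') = u
    · rw [resMap_x_pos p' w hvu, resMap_x_pos p' w hvu]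
      exact max_le_max (x_mono hp u hle) (x_mono hp u' hle)
    · rw [resMap_x_neg p' w hvu, resMap_x_neg p' w hvu]
      exact x_mono hp w.val hle
  refine ⟨?_, ?_, ?_, ?_, ?_, ?_, fun w i h => qmono w i h⟩
  · rintro ⟨v, i⟩
    by_cases hvu : (v : V') = u
    · rw [resMap_x_pos p' v hvu]
      rcases hp.1 (u, i) with h | h <;> rcases hp.1 (u', i) with h' | h'
      · exact Or.inl (by rw [h, h', max_self])
      · exact Or.inr (by rw [h, h']; exact max_eq_right zero_le_one)
      · exact Or.inr (by rw [h, h']; exact max_eq_left zero_le_one)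
      · exact Or.inr (by rw [h, h', max_self])
    · rw [resMap_x_neg p' v hvu]; exact hp.1 _
  · rintro ⟨v, i⟩
    by_cases hvu : (v : V') = u
    · rw [resMap_y_pos p' v hvu]
      rcases hp.2.1 (u, i) with h | h <;> rcases hp.2.1 (u', i) with h' | h'
      · exact Or.inl (by rw [h, h', add_zero])
      · exact Or.inr (by rw [h, h', zero_add])
      · exact Or.inr (by rw [h, h', add_zero])
      · exfalso
        have hps := pair_le_sum hp hne i
        have := hc1 i
        rw [h, h'] at hps
        linarith
    · rw [resMap_y_neg p' v hvu]; exact hp.2.1 _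
  · intro i
    have key : ∑ v : {w : V' // w ≠ u'}, (resMap u u' p').2 (v, i) = ∑ v : V', p'.2 (v, i) := by
      rw [sum_split_univ u' (fun v => p'.2 (v, i))]
      have hupd : ∑ v : {w : V' // w ≠ u'}, (resMap u u' p').2 (v, i)
          = (∑ v : {w : V' // w ≠ u'}, p'.2 (v.val, i))
            + (if (⟨u, hne⟩ : {w : V' // w ≠ u'}) ∈ (Finset.univ : Finset {w : V' // w ≠ u'})
                then (resMap u u' p').2 (⟨u, hne⟩, i) - p'.2 (u, i) else 0) :=
        sum_eq_update _ _ _ _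
          (fun x _ hx => resMap_y_neg p' x (fun hc => hx (Subtype.ext hc)) i)
      rw [hupd, resMap_y_pos (u := u) p' ⟨u, hne⟩ rfl i]
      simp only [Finset.mem_univ, if_true]
      ring
    rw [key]; exact hc1 i
  · intro v
    by_cases hvu : (v : V') = u
    · simp only [resMap_y_pos p' v hvu, Finset.sum_add_distrib]
      exact plays_le_one hp hne htwin
    · simp only [resMap_y_neg p' v hvu]
      exact hp.2.2.2.1 v.val
  · intro v i h
    have hle : i ≤ (⟨i.1 + 1, h⟩ : Fin m) := by rw [Fin.le_def]; simp
    have hRHSnn : (0:ℝ) ≤ ∑ w ∈ gN (delVert G' u') (delSet C' u') v,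
        ((resMap u u' p').1 (w, i) - (resMap u u' p').1 (w, ⟨i.1 + 1, h⟩)) :=
      Finset.sum_nonneg fun w _ => sub_nonneg.2 (qmono w i h)
    have hRHS_eq : ∑ w ∈ gN (delVert G' u') (delSet C' u') v,
        ((resMap u u' p').1 (w, i) - (resMap u u' p').1 (w, ⟨i.1 + 1, h⟩))
        = (∑ w ∈ gN (delVert G' u') (delSet C' u') v,
            (p'.1 (w.val, i) - p'.1 (w.val, ⟨i.1 + 1, h⟩)))
          + (if (⟨u, hne⟩ : {w : V' // w ≠ u'}) ∈ gN (delVert G' u') (delSet C' u') v then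
              ((max (p'.1 (u, i)) (p'.1 (u', i)) - max (p'.1 (u, ⟨i.1 + 1, h⟩)) (p'.1 (u', ⟨i.1 + 1, h⟩)))
                - (p'.1 (u, i) - p'.1 (u, ⟨i.1 + 1, h⟩))) else 0) := by
      have hupd : ∑ w ∈ gN (delVert G' u') (delSet C' u') v,
          ((resMap u u' p').1 (w, i) - (resMap u u' p').1 (w, ⟨i.1 + 1, h⟩))
          = (∑ w ∈ gN (delVert G' u') (delSet C' u') v,
              (p'.1 (w.val, i) - p'.1 (w.val, ⟨i.1 + 1, h⟩)))
            + (if (⟨u, hne⟩ : {w : V' // w ≠ u'}) ∈ gN (delVert G' u') (delSet C' u') v then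
                ((resMap u u' p').1 (⟨u, hne⟩, i) - (resMap u u' p').1 (⟨u, hne⟩, ⟨i.1 + 1, h⟩))
                  - (p'.1 (u, i) - p'.1 (u, ⟨i.1 + 1, h⟩)) else 0) :=
        sum_eq_update _ _ _ _
          (fun x _ hx => by
            rw [resMap_x_neg p' x (fun hc => hx (Subtype.ext hc)),
              resMap_x_neg p' x (fun hc => hx (Subtype.ext hc))])
      rw [hupd, resMap_x_pos (u := u) p' ⟨u, hne⟩ rfl, resMap_x_pos (u := u) p' ⟨u, hne⟩ rfl]
    have hA : ∑ w ∈ gN (delVert G' u') (delSet C' u') v,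
        (p'.1 (w.val, i) - p'.1 (w.val, ⟨i.1 + 1, h⟩))
        = (∑ w ∈ gN G' C' v.val, (p'.1 (w, i) - p'.1 (w, ⟨i.1 + 1, h⟩)))
          - (if u' ∈ gN G' C' v.val then p'.1 (u', i) - p'.1 (u', ⟨i.1 + 1, h⟩) else 0) := by
      rw [sum_gN_split v.val v.2 (fun w => p'.1 (w, i) - p'.1 (w, ⟨i.1 + 1, h⟩))]
      ring
    have key : ∀ a : V', gN G' C' a = gN G' C' v.val → p'.2 (a, ⟨i.1 + 1, h⟩) = 1 →
        (1:ℝ) ≤ ∑ w ∈ gN (delVert G' u') (delSet C' u') v,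
          ((resMap u u' p').1 (w, i) - (resMap u u' p').1 (w, ⟨i.1 + 1, h⟩)) := by
      intro a hNa ha1
      have h3 := hc3 a i h
      rw [ha1, hNa] at h3
      by_cases hu : u ∈ gN G' C' v.val
      · have hu' : u' ∈ gN G' C' v.val := (twin_mem_iff htwin _).1 hu
        have hua : u ∈ gN G' C' a := by rw [hNa]; exact hu
        have hu'a : u' ∈ gN G' C' a := by rw [hNa]; exact hu'
        have hau : a ∈ gN G' C' u := gN_symm.1 hua
        have hau' : a ∈ gN G' C' u' := gN_symm.1 hu'a
        have hx1 : p'.1 (u, ⟨i.1 + 1, h⟩) = 0 := by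
          have h4 := hc4 u ⟨i.1 + 1, h⟩
          have hs : p'.2 (a, ⟨i.1 + 1, h⟩) ≤ ∑ w ∈ gN G' C' u, p'.2 (w, ⟨i.1 + 1, h⟩) :=
            Finset.single_le_sum (f := fun w => p'.2 (w, (⟨i.1 + 1, h⟩ : Fin m)))
              (fun w _ => y_nonneg hp _) hau
          rw [ha1] at hs
          have := x_nonneg hp (u, ⟨i.1 + 1, h⟩)
          linarith
        have hx1' : p'.1 (u', ⟨i.1 + 1, h⟩) = 0 := by
          have h4 := hc4 u' ⟨i.1 + 1, h⟩
          have hs : p'.2 (a, ⟨i.1 + 1, h⟩) ≤ ∑ w ∈ gN G' C' u', p'.2 (w, ⟨i.1 + 1, h⟩) :=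
            Finset.single_le_sum (f := fun w => p'.2 (w, (⟨i.1 + 1, h⟩ : Fin m)))
              (fun w _ => y_nonneg hp _) hau'
          rw [ha1] at hs
          have := x_nonneg hp (u', ⟨i.1 + 1, h⟩)
          linarith
        have hpair : (p'.1 (u, i) - p'.1 (u, ⟨i.1 + 1, h⟩))
            + (p'.1 (u', i) - p'.1 (u', ⟨i.1 + 1, h⟩))
            ≤ ∑ w ∈ gN G' C' v.val, (p'.1 (w, i) - p'.1 (w, ⟨i.1 + 1, h⟩)) := by
          have hsub : ({u, u'} : Finset V') ⊆ gN G' C' v.val :=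
            Finset.insert_subset_iff.2 ⟨hu, Finset.singleton_subset_iff.2 hu'⟩
          have := Finset.sum_le_sum_of_subset_of_nonneg hsub
            (fun w _ _ => sub_nonneg.2 (x_mono hp w hle))
          rwa [Finset.sum_pair hne] at this
        have hmemdel : (⟨u, hne⟩ : {w : V' // w ≠ u'}) ∈ gN (delVert G' u') (delSet C' u') v :=
          mem_gN_del.2 hu
        rw [hRHS_eq, hA, if_pos hmemdel, if_pos hu']
        have hM0 : max (p'.1 (u, ⟨i.1 + 1, h⟩)) (p'.1 (u', ⟨i.1 + 1, h⟩)) = 0 := by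
          rw [hx1, hx1', max_self]
        have hMl := le_max_left (p'.1 (u, i)) (p'.1 (u', i))
        have hMr := le_max_right (p'.1 (u, i)) (p'.1 (u', i))
        rcases hp.1 (u, i) with hxu | hxu <;> rcases hp.1 (u', i) with hxu' | hxu' <;>
          linarith
      · have hu' : u' ∉ gN G' C' v.val := fun hh => hu ((twin_mem_iff htwin _).2 hh)
        have hmemdel : (⟨u, hne⟩ : {w : V' // w ≠ u'}) ∉ gN (delVert G' u') (delSet C' u') v :=
          fun hh => hu (mem_gN_del.1 hh)
        rw [hRHS_eq, hA, if_neg hmemdel, if_neg hu']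
        linarith
    by_cases hvu : (v : V') = u
    · rw [resMap_y_pos p' v hvu]
      rcases hp.2.1 (u, ⟨i.1 + 1, h⟩) with h1 | h1 <;> rcases hp.2.1 (u', ⟨i.1 + 1, h⟩) with h2 | h2
      · rw [h1, h2]; simpa using hRHSnn
      · rw [h1, h2]
        have := key u' (by rw [hvu, ← htwin]) h2
        linarith
      · rw [h1, h2]
        have := key u (by rw [hvu]) h1
        linarith
      · exfalso
        have hps := pair_le_sum hp hne (⟨i.1 + 1, h⟩ : Fin m)
        have := hc1 (⟨i.1 + 1, h⟩ : Fin m)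
        rw [h1, h2] at hps
        linarith
    · rw [resMap_y_neg p' v hvu]
      rcases hp.2.1 (v.val, ⟨i.1 + 1, h⟩) with h1 | h1
      · rw [h1]; exact hRHSnn
      · have := key v.val rfl h1
        linarith
  · intro w i
    have hsum : ∑ v ∈ gN (delVert G' u') (delSet C' u') w, (resMap u u' p').2 (v, i)
        = ∑ v ∈ gN G' C' w.val, p'.2 (v, i) := by
      have hupd : ∑ v ∈ gN (delVert G' u') (delSet C' u') w, (resMap u u' p').2 (v, i)
          = (∑ v ∈ gN (delVert G' u') (delSet C' u') w, p'.2 (v.val, i))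
            + (if (⟨u, hne⟩ : {w : V' // w ≠ u'}) ∈ gN (delVert G' u') (delSet C' u') w
                then (resMap u u' p').2 (⟨u, hne⟩, i) - p'.2 (u, i) else 0) :=
        sum_eq_update _ _ _ _
          (fun x _ hx => resMap_y_neg p' x (fun hc => hx (Subtype.ext hc)) i)
      rw [hupd, sum_gN_split w.val w.2 (fun v => p'.2 (v, i)),
        resMap_y_pos (u := u) p' ⟨u, hne⟩ rfl i]
      have hiff : (⟨u, hne⟩ : {w : V' // w ≠ u'}) ∈ gN (delVert G' u') (delSet C' u') w
          ↔ u' ∈ gN G' C' w.val := by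
        rw [mem_gN_del]; exact twin_mem_iff htwin _
      by_cases hcc : u' ∈ gN G' C' w.val
      · rw [if_pos (hiff.2 hcc), if_pos hcc] <;> ring
      · rw [if_neg (fun hm => hcc (hiff.1 hm)), if_neg hcc] <;> ring
    rw [hsum]
    by_cases hvu : (w : V') = u
    · rw [resMap_x_pos p' w hvu, hvu]
      have h4u := hc4 u i
      have h4u' := hc4 u' i
      rw [show gN G' C' u' = gN G' C' u from htwin.symm] at h4u'
      rw [← le_sub_iff_add_le]
      exact max_le (by linarith) (by linarith)
    · rw [resMap_x_neg p' w hvu]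
      exact hc4 w.val i

end ResFeas

section Swap

variable {V' : Type*} [Fintype V'] [DecidableEq V'] {G' : SimpleGraph V'} {C' : Set V'}
  {u u' : V'} {m : ℕ}

lemma twin_memC (hne : u ≠ u') (htwin : gN G' C' u = gN G' C' u') :
    (u ∈ C' ↔ G'.Adj u u') ∧ (u' ∈ C' ↔ G'.Adj u u') := by
  have h1 : u ∈ gN G' C' u ↔ u ∈ C' := by simp [mem_gN]
  have h2 : u ∈ gN G' C' u' ↔ G'.Adj u u' := by
    rw [mem_gN]
    constructor
    · rintro (h | ⟨h, -⟩)
      · exact h.symm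
      · exact absurd h hne
    · exact fun h => Or.inl h.symm
  have h3 : u' ∈ gN G' C' u ↔ G'.Adj u u' := by
    rw [mem_gN]
    constructor
    · rintro (h | ⟨h, -⟩)
      · exact h
      · exact absurd h (Ne.symm hne)
    · exact fun h => Or.inl h
  have h4 : u' ∈ gN G' C' u' ↔ u' ∈ C' := by simp [mem_gN]
  constructor
  · rw [← h1, htwin, h2]
  · rw [← h4, ← htwin, h3]

lemma twin_adj_iff (hne : u ≠ u') (htwin : gN G' C' u = gN G' C' u') (w : V')
    (hw1 : w ≠ u) (hw2 : w ≠ u') : G'.Adj u w ↔ G'.Adj u' w := by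
  have h1 : w ∈ gN G' C' u ↔ G'.Adj u w := by
    rw [mem_gN]
    constructor
    · rintro (h | ⟨h, -⟩)
      · exact h
      · exact absurd h hw1
    · exact fun h => Or.inl h
  have h2 : w ∈ gN G' C' u' ↔ G'.Adj u' w := by
    rw [mem_gN]
    constructor
    · rintro (h | ⟨h, -⟩)
      · exact h
      · exact absurd h hw2
    · exact fun h => Or.inl h
  rw [← h1, ← h2, htwin]

lemma swap_memC (hne : u ≠ u') (htwin : gN G' C' u = gN G' C' u') (v : V') :
    Equiv.swap u u' v ∈ C' ↔ v ∈ C' := by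
  obtain ⟨hC1, hC2⟩ := twin_memC hne htwin
  by_cases hv : v = u
  · rw [hv, Equiv.swap_apply_left, hC2, hC1]
  · by_cases hv' : v = u'
    · rw [hv', Equiv.swap_apply_right, hC1, hC2]
    · rw [Equiv.swap_apply_of_ne_of_ne hv hv']

lemma swap_adj (hne : u ≠ u') (htwin : gN G' C' u = gN G' C' u') (v w : V') :
    G'.Adj (Equiv.swap u u' v) (Equiv.swap u u' w) ↔ G'.Adj v w := by
  have key : ∀ z : V', G'.Adj u (Equiv.swap u u' z) ↔ G'.Adj u' z := by
    intro z
    by_cases hz : z = u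
    · rw [hz, Equiv.swap_apply_left]
      rw [G'.adj_comm u u']
    · by_cases hz' : z = u'
      · rw [hz', Equiv.swap_apply_right]
        simp [SimpleGraph.irrefl]
      · rw [Equiv.swap_apply_of_ne_of_ne hz hz']
        exact twin_adj_iff hne htwin z hz hz'
  have key' : ∀ z : V', G'.Adj u' (Equiv.swap u u' z) ↔ G'.Adj u z := by
    intro z
    by_cases hz : z = u
    · rw [hz, Equiv.swap_apply_left]
      simp [SimpleGraph.irrefl]
    · by_cases hz' : z = u'
      · rw [hz', Equiv.swap_apply_right]
        rw [G'.adj_comm u' u]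
      · rw [Equiv.swap_apply_of_ne_of_ne hz hz']
        exact (twin_adj_iff hne htwin z hz hz').symm
  by_cases hv : v = u
  · rw [hv, Equiv.swap_apply_left]
    exact key' w
  · by_cases hv' : v = u'
    · rw [hv', Equiv.swap_apply_right]
      exact key w
    · rw [Equiv.swap_apply_of_ne_of_ne hv hv']
      by_cases hw : w = u
      · rw [hw, Equiv.swap_apply_left, G'.adj_comm v u', G'.adj_comm v u]
        exact (twin_adj_iff hne htwin v hv hv').symm
      · by_cases hw' : w = u'
        · rw [hw', Equiv.swap_apply_right, G'.adj_comm v u, G'.adj_comm v u']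
          exact twin_adj_iff hne htwin v hv hv'
        · rw [Equiv.swap_apply_of_ne_of_ne hw hw']

lemma mem_gN_swap (hne : u ≠ u') (htwin : gN G' C' u = gN G' C' u') (v w : V') :
    Equiv.swap u u' w ∈ gN G' C' (Equiv.swap u u' v) ↔ w ∈ gN G' C' v := by
  rw [mem_gN, mem_gN, swap_adj hne htwin, swap_memC hne htwin]
  constructor
  · rintro (h | ⟨h, h2⟩)
    · exact Or.inl h
    · exact Or.inr ⟨(Equiv.swap u u').injective h, h2⟩
  · rintro (h | ⟨h, h2⟩)
    · exact Or.inl h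
    · exact Or.inr ⟨by rw [h], h2⟩

lemma sum_gN_swap (hne : u ≠ u') (htwin : gN G' C' u = gN G' C' u') (v : V') (F : V' → ℝ) :
    ∑ w ∈ gN G' C' (Equiv.swap u u' v), F w = ∑ w ∈ gN G' C' v, F (Equiv.swap u u' w) := by
  have himg : gN G' C' (Equiv.swap u u' v) = (gN G' C' v).image (Equiv.swap u u') := by
    ext x
    simp only [Finset.mem_image]
    constructor
    · intro hx
      refine ⟨Equiv.swap u u' x, ?_, Equiv.swap_apply_self _ _ _⟩
      rw [← mem_gN_swap hne htwin v (Equiv.swap u u' x), Equiv.swap_apply_self]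
      exact hx
    · rintro ⟨a, ha, rfl⟩
      exact (mem_gN_swap hne htwin v a).2 ha
  rw [himg, Finset.sum_image (fun x _ y _ h => (Equiv.swap u u').injective h)]

lemma swapMap_involutive (p : Pt V' m) : swapMap u u' (swapMap u u' p) = p := by
  unfold swapMap
  refine Prod.ext ?_ ?_ <;> funext q <;> simp [Equiv.swap_apply_self]

lemma swap_feasible (hne : u ≠ u') (htwin : gN G' C' u = gN G' C' u') {p : Pt V' m}
    (hp : p ∈ Feasible G' C' m) : swapMap u u' p ∈ Feasible G' C' m := by
  refine ⟨fun q => hp.1 _, fun q => hp.2.1 _, ?_, fun v => hp.2.2.2.1 (Equiv.swap u u' v), ?_, ?_, ?_⟩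
  · intro i
    have := Equiv.sum_comp (Equiv.swap u u') (fun v => p.2 (v, i))
    calc ∑ v : V', (swapMap u u' p).2 (v, i)
        = ∑ v : V', p.2 (Equiv.swap u u' v, i) := rfl
      _ = ∑ v : V', p.2 (v, i) := this
      _ ≤ 1 := hp.2.2.1 i
  · intro v i h
    have h3 := hp.2.2.2.2.1 (Equiv.swap u u' v) i h
    calc (swapMap u u' p).2 (v, ⟨i.1 + 1, h⟩)
        = p.2 (Equiv.swap u u' v, ⟨i.1 + 1, h⟩) := rfl
      _ ≤ ∑ w ∈ gN G' C' (Equiv.swap u u' v), (p.1 (w, i) - p.1 (w, ⟨i.1 + 1, h⟩)) := h3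
      _ = ∑ w ∈ gN G' C' v, (p.1 (Equiv.swap u u' w, i) - p.1 (Equiv.swap u u' w, ⟨i.1 + 1, h⟩)) :=
          sum_gN_swap hne htwin v _
      _ = ∑ w ∈ gN G' C' v, ((swapMap u u' p).1 (w, i) - (swapMap u u' p).1 (w, ⟨i.1 + 1, h⟩)) := rfl
  · intro w i
    have h4 := hp.2.2.2.2.2.1 (Equiv.swap u u' w) i
    calc (swapMap u u' p).1 (w, i) + ∑ v ∈ gN G' C' w, (swapMap u u' p).2 (v, i)
        = p.1 (Equiv.swap u u' w, i) + ∑ v ∈ gN G' C' w, p.2 (Equiv.swap u u' v, i) := rfl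
      _ = p.1 (Equiv.swap u u' w, i) + ∑ v ∈ gN G' C' (Equiv.swap u u' w), p.2 (v, i) := by
          rw [sum_gN_swap hne htwin w (fun v => p.2 (v, i))]
      _ ≤ 1 := h4
  · intro w i h
    exact hp.2.2.2.2.2.2 (Equiv.swap u u' w) i h

end Swap

section LinAlg

variable {E F : Type*} [AddCommGroup E] [Module ℝ E] [AddCommGroup F] [Module ℝ F]

lemma mapsto_hull {L : E → F} (hL : IsLinearMap ℝ L) {S : Set E} {T : Set F}
    (hST : ∀ p ∈ S, L p ∈ T) :
    ∀ p ∈ convexHull ℝ S, L p ∈ convexHull ℝ T := by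
  intro p hp
  have h1 : S ⊆ L ⁻¹' (convexHull ℝ T) := fun s hs => subset_convexHull ℝ T (hST s hs)
  have h2 : Convex ℝ (L ⁻¹' (convexHull ℝ T)) :=
    (convex_convexHull ℝ T).is_linear_preimage hL
  exact convexHull_min h1 h2 hp

lemma valid_hull {f : E → ℝ} (hf : IsLinearMap ℝ f) {S : Set E} {a : ℝ}
    (h : ∀ p ∈ S, f p ≤ a) : ∀ p ∈ convexHull ℝ S, f p ≤ a :=
  fun p hp => convexHull_min h (convex_halfSpace_le hf a) hp

lemma direction_image_le (L : E →ₗ[ℝ] F) (S : Set E) (T : Set F) (h : L '' S ⊆ T) :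
    ((affineSpan ℝ S).direction).map L ≤ (affineSpan ℝ T).direction := by
  rw [direction_affineSpan, direction_affineSpan, vectorSpan_def, vectorSpan_def,
    Submodule.map_span]
  apply Submodule.span_mono
  rintro x ⟨y, hy, rfl⟩
  rw [Set.mem_vsub] at hy
  obtain ⟨y1, hy1, y2, hy2, rfl⟩ := hy
  rw [Set.mem_vsub]
  refine ⟨L y1, h ⟨y1, hy1, rfl⟩, L y2, h ⟨y2, hy2, rfl⟩, ?_⟩
  simp [vsub_eq_sub, map_sub]

lemma exists_root_ne_zero [FiniteDimensional ℝ E]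
    {S : Set E} {f g : E →ₗ[ℝ] ℝ} {a : ℝ} (ha : a ≠ 0) (hf : ∀ p ∈ S, f p = a)
    (hg : g ≠ 0) (hE : 2 ≤ Module.finrank ℝ E)
    (hrank : Module.finrank ℝ (affineSpan ℝ S).direction = Module.finrank ℝ E - 1) :
    ∃ p ∈ S, g p ≠ 0 := by
  by_contra hno
  push_neg at hno
  rcases S.eq_empty_or_nonempty with hS | ⟨p₀, hp₀⟩
  · have hb : Module.finrank ℝ (affineSpan ℝ (∅ : Set E)).direction = 0 := by simp
    rw [hS, hb] at hrank
    omega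
  · have hfp₀ := hf p₀ hp₀
    have hf0 : f ≠ 0 := by
      intro h
      rw [h] at hfp₀
      simp at hfp₀
      exact ha hfp₀.symm
    have hsub : S ⊆ (AffineSubspace.mk' p₀ (LinearMap.ker f ⊓ LinearMap.ker g) : Set E) := by
      intro p hp
      rw [AffineSubspace.mem_coe, AffineSubspace.mem_mk']
      rw [Submodule.mem_inf]
      constructor
      · rw [LinearMap.mem_ker, vsub_eq_sub, map_sub, hf p hp, hfp₀, sub_self]
      · rw [LinearMap.mem_ker, vsub_eq_sub, map_sub, hno p hp, hno p₀ hp₀, sub_self]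
    have hdir : (affineSpan ℝ S).direction ≤ LinearMap.ker f ⊓ LinearMap.ker g := by
      have := AffineSubspace.direction_le (affineSpan_le.2 hsub)
      rwa [AffineSubspace.direction_mk'] at this
    have hker : Module.finrank ℝ (LinearMap.ker f) = Module.finrank ℝ E - 1 := by
      have hrn := LinearMap.finrank_range_add_finrank_ker f
      have hle : Module.finrank ℝ (LinearMap.range f) ≤ 1 := by
        have := Submodule.finrank_le (LinearMap.range f)
        simpa using this
      have hne0 : Module.finrank ℝ (LinearMap.range f) ≠ 0 := by
        intro h0
        have := Submodule.finrank_eq_zero.1 h0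
        rw [LinearMap.range_eq_bot] at this
        exact hf0 this
      omega
    have hinf_eq : LinearMap.ker f ⊓ LinearMap.ker g = LinearMap.ker f := by
      apply Submodule.eq_of_le_of_finrank_le inf_le_left
      have h2 := Submodule.finrank_mono hdir
      omega
    have hkk : LinearMap.ker f ≤ LinearMap.ker g := by
      rw [← hinf_eq]; exact inf_le_right
    obtain ⟨z, hz⟩ : ∃ z, f z ≠ 0 := by
      by_contra hc
      push_neg at hc
      exact hf0 (LinearMap.ext fun w => by rw [hc w]; rfl)
    have hgz : ∀ w, g w = f w * (g z / f z) := by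
      intro w
      have hmem : w - (f w / f z) • z ∈ LinearMap.ker f := by
        rw [LinearMap.mem_ker, map_sub, map_smul, smul_eq_mul]
        field_simp
        ring
      have hm := hkk hmem
      rw [LinearMap.mem_ker, map_sub, map_smul, smul_eq_mul, sub_eq_zero] at hm
      rw [hm, div_mul_eq_mul_div, mul_div_assoc]
    have hgz0 : g z * a = 0 := by
      have hh := hgz p₀
      rw [hno p₀ hp₀, hfp₀] at hh
      have : a * (g z / f z) = 0 := hh.symm
      rcases mul_eq_zero.1 this with h | h
      · exact absurd h ha
      · rcases div_eq_zero_iff.1 h with h' | h'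
        · rw [h', zero_mul]
        · exact absurd h' hz
    have hgz' : g z = 0 := by
      rcases mul_eq_zero.1 hgz0 with h | h
      · exact h
      · exact absurd h ha
    apply hg
    apply LinearMap.ext
    intro w
    rw [hgz w, hgz', zero_div, mul_zero]
    rfl

lemma finrank_Pt (V : Type*) [Fintype V] (m : ℕ) :
    Module.finrank ℝ (Pt V m) = 2 * Fintype.card V * m := by
  rw [Module.finrank_prod, Module.finrank_pi]
  simp [Fintype.card_prod]
  ring

end LinAlg

section Linearity

variable {V' : Type*} [Fintype V'] [DecidableEq V'] {u u' : V'} {m : ℕ}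

lemma pairSum_linear {V : Type*} [Fintype V] (c d : (V × Fin m) → ℝ) :
    IsLinearMap ℝ (fun p : Pt V m => (∑ q, c q * p.1 q) + (∑ q, d q * p.2 q)) := by
  constructor
  · intro p q
    have h1 : ∀ r : V × Fin m, c r * (p + q).1 r = c r * p.1 r + c r * q.1 r := by
      intro r; show c r * (p.1 r + q.1 r) = _; ring
    have h2 : ∀ r : V × Fin m, d r * (p + q).2 r = d r * p.2 r + d r * q.2 r := by
      intro r; show d r * (p.2 r + q.2 r) = _; ring
    rw [Finset.sum_congr rfl (fun r _ => h1 r), Finset.sum_congr rfl (fun r _ => h2 r),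
      Finset.sum_add_distrib, Finset.sum_add_distrib]
    ring
  · intro a p
    have h1 : ∀ r : V × Fin m, c r * (a • p).1 r = a * (c r * p.1 r) := by
      intro r; show c r * (a * p.1 r) = _; ring
    have h2 : ∀ r : V × Fin m, d r * (a • p).2 r = a * (d r * p.2 r) := by
      intro r; show d r * (a * p.2 r) = _; ring
    rw [Finset.sum_congr rfl (fun r _ => h1 r), Finset.sum_congr rfl (fun r _ => h2 r),
      ← Finset.mul_sum, ← Finset.mul_sum]
    show _ = a * _
    ring

lemma liftX_linear (hne : u ≠ u') (j : ℕ) :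
    IsLinearMap ℝ (liftX u u' hne j (m := m)) := by
  constructor
  · intro p q
    refine Prod.ext ?_ ?_ <;> funext r <;> show _ = _ <;> unfold liftX <;>
      dsimp only [Prod.fst_add, Prod.snd_add, Pi.add_apply] <;> split_ifs <;> simp
  · intro a p
    refine Prod.ext ?_ ?_ <;> funext r <;> unfold liftX <;>
      dsimp only [Prod.smul_fst, Prod.smul_snd, Pi.smul_apply, smul_eq_mul] <;>
      split_ifs <;> simp

lemma liftY_linear (hne : u ≠ u') (j : Fin m) :
    IsLinearMap ℝ (liftY u u' hne j (m := m)) := by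
  constructor
  · intro p q
    refine Prod.ext ?_ ?_ <;> funext r <;> unfold liftY <;>
      dsimp only [Prod.fst_add, Prod.snd_add, Pi.add_apply] <;> split_ifs <;> simp
  · intro a p
    refine Prod.ext ?_ ?_ <;> funext r <;> unfold liftY <;>
      dsimp only [Prod.smul_fst, Prod.smul_snd, Pi.smul_apply, smul_eq_mul] <;>
      split_ifs <;> simp

lemma swapMap_linear : IsLinearMap ℝ (swapMap u u' (m := m) (V' := V')) :=
  ⟨fun _ _ => rfl, fun _ _ => rfl⟩

/-- Restriction to the deleted instance (forgetting the `u'` coordinates). -/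
def resSub (u' : V') (p : Pt V' m) : Pt {w : V' // w ≠ u'} m :=
  (fun q => p.1 (q.1.val, q.2), fun q => p.2 (q.1.val, q.2))

lemma resSub_linear : IsLinearMap ℝ (resSub u' (m := m) (V' := V')) :=
  ⟨fun _ _ => rfl, fun _ _ => rfl⟩

lemma resSub_liftX (hne : u ≠ u') (j : ℕ) (p : Pt {w : V' // w ≠ u'} m) :
    resSub u' (liftX u u' hne j p) = p := by
  refine Prod.ext ?_ ?_ <;> funext q <;> unfold resSub <;> dsimp only <;>
    simp [liftX, q.1.2]

end Linearity

section Values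

variable {V' : Type*} [Fintype V'] [DecidableEq V'] {u u' : V'} {m : ℕ}
  {πx πy : ({w : V' // w ≠ u'} × Fin m) → ℝ} {πx1 πy1 πx2 : (V' × Fin m) → ℝ}

/-- Splitting a sum over `V' × Fin m` into the `u'` row and the rest. -/
lemma sum_pt_split (u' : V') (F : (V' × Fin m) → ℝ) :
    ∑ q : V' × Fin m, F q
      = (∑ i : Fin m, F (u', i))
        + ∑ q : {w : V' // w ≠ u'} × Fin m, F (q.1.val, q.2) := by
  rw [Fintype.sum_prod_type]
  have hsplit : ∑ v : V', (∑ i : Fin m, F (v, i))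
      = (∑ i : Fin m, F (u', i))
        + ∑ v : {w : V' // w ≠ u'}, ∑ i : Fin m, F (v.val, i) :=
    sum_split_univ u' _
  rw [hsplit, Fintype.sum_prod_type]

lemma f_liftX_eq (hne : u ≠ u') (j : ℕ)
    (hx0 : ∀ i, πx1 (u', i) = 0)
    (hxv : ∀ (v : {w : V' // w ≠ u'}) (i : Fin m), πx1 (v.val, i) = πx (v, i))
    (hyv : ∀ (v : {w : V' // w ≠ u'}) (i : Fin m), πy1 (v.val, i) = πy (v, i))
    (p : Pt {w : V' // w ≠ u'} m) :
    (∑ q, πx1 q * (liftX u u' hne j p).1 q) + (∑ q, πy1 q * (liftX u u' hne j p).2 q)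
      = (∑ q, πx q * p.1 q) + (∑ q, πy q * p.2 q) := by
  have hx : ∑ q : V' × Fin m, πx1 q * (liftX u u' hne j p).1 q
      = ∑ q : {w : V' // w ≠ u'} × Fin m, πx q * p.1 q := by
    rw [sum_pt_split u' (fun q => πx1 q * (liftX u u' hne j p).1 q)]
    have h0 : ∑ i : Fin m, πx1 (u', i) * (liftX u u' hne j p).1 (u', i) = 0 :=
      Finset.sum_eq_zero fun i _ => by rw [hx0 i, zero_mul]
    rw [h0, zero_add]
    refine Finset.sum_congr rfl fun q _ => ?_
    show πx1 (q.1.val, q.2) * (liftX u u' hne j p).1 (q.1.val, q.2) = πx q * p.1 q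
    rw [hxv q.1 q.2, liftX_x_val hne j p q.1 q.2]
  have hy : ∑ q : V' × Fin m, πy1 q * (liftX u u' hne j p).2 q
      = ∑ q : {w : V' // w ≠ u'} × Fin m, πy q * p.2 q := by
    rw [sum_pt_split u' (fun q => πy1 q * (liftX u u' hne j p).2 q)]
    have h0 : ∑ i : Fin m, πy1 (u', i) * (liftX u u' hne j p).2 (u', i) = 0 :=
      Finset.sum_eq_zero fun i _ => by rw [liftX_y_u', mul_zero]
    rw [h0, zero_add]
    refine Finset.sum_congr rfl fun q _ => ?_
    show πy1 (q.1.val, q.2) * (liftX u u' hne j p).2 (q.1.val, q.2) = πy q * p.2 q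
    rw [hyv q.1 q.2, liftX_y_val hne j p q.1 q.2]
  rw [hx, hy]

lemma f_liftY_eq (hne : u ≠ u') (j : Fin m)
    (hxv : ∀ (v : {w : V' // w ≠ u'}) (i : Fin m), πx1 (v.val, i) = πx (v, i))
    (hyu' : ∀ i, πy1 (u', i) = πy (⟨u, hne⟩, i))
    (hyv : ∀ (v : {w : V' // w ≠ u'}) (i : Fin m), πy1 (v.val, i) = πy (v, i))
    (p : Pt {w : V' // w ≠ u'} m) :
    (∑ q, πx1 q * (liftY u u' hne j p).1 q) + (∑ q, πy1 q * (liftY u u' hne j p).2 q)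
      = (∑ q, πx q * p.1 q) + (∑ q, πy q * p.2 q) := by
  have hx : ∑ q : V' × Fin m, πx1 q * (liftY u u' hne j p).1 q
      = ∑ q : {w : V' // w ≠ u'} × Fin m, πx q * p.1 q := by
    rw [sum_pt_split u' (fun q => πx1 q * (liftY u u' hne j p).1 q)]
    have h0 : ∑ i : Fin m, πx1 (u', i) * (liftY u u' hne j p).1 (u', i) = 0 :=
      Finset.sum_eq_zero fun i _ => by rw [liftY_x_u', mul_zero]
    rw [h0, zero_add]
    refine Finset.sum_congr rfl fun q _ => ?_
    show πx1 (q.1.val, q.2) * (liftY u u' hne j p).1 (q.1.val, q.2) = πx q * p.1 q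
    rw [hxv q.1 q.2, liftY_x_val hne j p q.1 q.2]
  have hy : ∑ q : V' × Fin m, πy1 q * (liftY u u' hne j p).2 q
      = ∑ q : {w : V' // w ≠ u'} × Fin m, πy q * p.2 q := by
    rw [sum_pt_split u' (fun q => πy1 q * (liftY u u' hne j p).2 q)]
    have h0 : ∑ i : Fin m, πy1 (u', i) * (liftY u u' hne j p).2 (u', i)
        = πy (⟨u, hne⟩, j) * p.2 (⟨u, hne⟩, j) := by
      have hterm : ∀ i : Fin m, πy1 (u', i) * (liftY u u' hne j p).2 (u', i)
          = if i = j then πy (⟨u, hne⟩, i) * p.2 (⟨u, hne⟩, j) else 0 := by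
        intro i
        rw [liftY_y_u', hyu' i]
        split_ifs <;> ring
      rw [Finset.sum_congr rfl (fun i _ => hterm i),
        Finset.sum_ite_eq' Finset.univ j (fun i => πy (⟨u, hne⟩, i) * p.2 (⟨u, hne⟩, j))]
      simp
    have hrest : ∑ q : {w : V' // w ≠ u'} × Fin m, πy1 (q.1.val, q.2)
          * (liftY u u' hne j p).2 (q.1.val, q.2)
        = (∑ q : {w : V' // w ≠ u'} × Fin m, πy q * p.2 q)
          - πy (⟨u, hne⟩, j) * p.2 (⟨u, hne⟩, j) := by
      have hterm : ∀ q : {w : V' // w ≠ u'} × Fin m,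
          πy1 (q.1.val, q.2) * (liftY u u' hne j p).2 (q.1.val, q.2)
            = if q = (⟨u, hne⟩, j) then 0 else πy q * p.2 q := by
        intro q
        rw [liftY_y_val hne j p q.1 q.2, hyv q.1 q.2]
        by_cases hq : q = (⟨u, hne⟩, j)
        · rw [if_pos hq, if_pos, mul_zero]
          exact ⟨by rw [hq], by rw [hq]⟩
        · rw [if_neg hq, if_neg]
          rintro ⟨h1, h2⟩
          exact hq (Prod.ext h1 h2)
      have hupd : ∑ q : {w : V' // w ≠ u'} × Fin m,
          (if q = (⟨u, hne⟩, j) then (0:ℝ) else πy q * p.2 q)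
          = (∑ q : {w : V' // w ≠ u'} × Fin m, πy q * p.2 q)
            + (if ((⟨u, hne⟩, j) : {w : V' // w ≠ u'} × Fin m)
                ∈ (Finset.univ : Finset ({w : V' // w ≠ u'} × Fin m)) then
                (if ((⟨u, hne⟩, j) : {w : V' // w ≠ u'} × Fin m) = (⟨u, hne⟩, j) then (0:ℝ)
                  else πy (⟨u, hne⟩, j) * p.2 (⟨u, hne⟩, j))
                  - πy (⟨u, hne⟩, j) * p.2 (⟨u, hne⟩, j) else 0) :=
        sum_eq_update _ _ _ _ (fun x _ hx => by rw [if_neg hx])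
      rw [Finset.sum_congr rfl (fun q _ => hterm q), hupd]
      simp
      ring
    rw [h0, hrest]
    ring
  rw [hx, hy]

lemma f_swap_eq
    (hswx : ∀ (v : V') (i : Fin m), πx1 (Equiv.swap u u' v, i) = πx2 (v, i))
    (hswy : ∀ (v : V') (i : Fin m), πy1 (Equiv.swap u u' v, i) = πy1 (v, i))
    (p : Pt V' m) :
    (∑ q, πx1 q * (swapMap u u' p).1 q) + (∑ q, πy1 q * (swapMap u u' p).2 q)
      = (∑ q, πx2 q * p.1 q) + (∑ q, πy1 q * p.2 q) := by
  have hx : ∑ q : V' × Fin m, πx1 q * (swapMap u u' p).1 q = ∑ q, πx2 q * p.1 q := by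
    have h1 := Equiv.sum_comp ((Equiv.swap u u').prodCongr (Equiv.refl (Fin m)))
      (fun q : V' × Fin m => πx1 q * p.1 (Equiv.swap u u' q.1, q.2))
    calc ∑ q : V' × Fin m, πx1 q * (swapMap u u' p).1 q
        = ∑ q : V' × Fin m, πx1 q * p.1 (Equiv.swap u u' q.1, q.2) := rfl
      _ = ∑ q : V' × Fin m, (fun q : V' × Fin m => πx1 q * p.1 (Equiv.swap u u' q.1, q.2))
            (((Equiv.swap u u').prodCongr (Equiv.refl (Fin m))) q) := h1.symm
      _ = ∑ q : V' × Fin m, πx2 q * p.1 q := by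
          refine Finset.sum_congr rfl fun q _ => ?_
          show πx1 (Equiv.swap u u' q.1, q.2)
              * p.1 (Equiv.swap u u' (Equiv.swap u u' q.1), q.2) = πx2 q * p.1 q
          rw [Equiv.swap_apply_self, hswx q.1 q.2]
  have hy : ∑ q : V' × Fin m, πy1 q * (swapMap u u' p).2 q = ∑ q, πy1 q * p.2 q := by
    have h1 := Equiv.sum_comp ((Equiv.swap u u').prodCongr (Equiv.refl (Fin m)))
      (fun q : V' × Fin m => πy1 q * p.2 (Equiv.swap u u' q.1, q.2))
    calc ∑ q : V' × Fin m, πy1 q * (swapMap u u' p).2 q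
        = ∑ q : V' × Fin m, πy1 q * p.2 (Equiv.swap u u' q.1, q.2) := rfl
      _ = ∑ q : V' × Fin m, (fun q : V' × Fin m => πy1 q * p.2 (Equiv.swap u u' q.1, q.2))
            (((Equiv.swap u u').prodCongr (Equiv.refl (Fin m))) q) := h1.symm
      _ = ∑ q : V' × Fin m, πy1 q * p.2 q := by
          refine Finset.sum_congr rfl fun q _ => ?_
          show πy1 (Equiv.swap u u' q.1, q.2)
              * p.2 (Equiv.swap u u' (Equiv.swap u u' q.1), q.2) = πy1 q * p.2 q
          rw [Equiv.swap_apply_self, hswy q.1 q.2]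
  rw [hx, hy]

lemma f_res_le (hne : u ≠ u')
    (hx0 : ∀ i, πx1 (u', i) = 0)
    (hxv : ∀ (v : {w : V' // w ≠ u'}) (i : Fin m), πx1 (v.val, i) = πx (v, i))
    (hyu' : ∀ i, πy1 (u', i) = πy (⟨u, hne⟩, i))
    (hyv : ∀ (v : {w : V' // w ≠ u'}) (i : Fin m), πy1 (v.val, i) = πy (v, i))
    (hnn : ∀ i, 0 ≤ πx (⟨u, hne⟩, i)) (p' : Pt V' m) :
    (∑ q, πx1 q * p'.1 q) + (∑ q, πy1 q * p'.2 q)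
      ≤ (∑ q, πx q * (resMap u u' p').1 q) + (∑ q, πy q * (resMap u u' p').2 q) := by
  have hx : ∑ q : V' × Fin m, πx1 q * p'.1 q
      ≤ ∑ q : {w : V' // w ≠ u'} × Fin m, πx q * (resMap u u' p').1 q := by
    rw [sum_pt_split u' (fun q => πx1 q * p'.1 q)]
    have h0 : ∑ i : Fin m, πx1 (u', i) * p'.1 (u', i) = 0 :=
      Finset.sum_eq_zero fun i _ => by rw [hx0 i, zero_mul]
    rw [h0, zero_add]
    refine Finset.sum_le_sum fun q _ => ?_
    show πx1 (q.1.val, q.2) * p'.1 (q.1.val, q.2)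
        ≤ πx (q.1, q.2) * (resMap u u' p').1 (q.1, q.2)
    rw [hxv q.1 q.2]
    by_cases hq : (q.1 : V') = u
    · rw [resMap_x_pos p' q.1 hq]
      have hle : p'.1 (q.1.val, q.2) ≤ max (p'.1 (u, q.2)) (p'.1 (u', q.2)) := by
        rw [hq]; exact le_max_left _ _
      have hcoeff : 0 ≤ πx (q.1, q.2) := by
        have hh : q.1 = (⟨u, hne⟩ : {w : V' // w ≠ u'}) := Subtype.ext hq
        rw [hh]; exact hnn q.2
      exact mul_le_mul_of_nonneg_left hle hcoeff
    · rw [resMap_x_neg p' q.1 hq]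
  have hy : ∑ q : V' × Fin m, πy1 q * p'.2 q
      = ∑ q : {w : V' // w ≠ u'} × Fin m, πy q * (resMap u u' p').2 q := by
    rw [sum_pt_split u' (fun q => πy1 q * p'.2 q)]
    have hterm : ∀ q : {w : V' // w ≠ u'} × Fin m,
        πy q * (resMap u u' p').2 (q.1, q.2)
          = πy q * p'.2 (q.1.val, q.2)
            + (if q.1 = (⟨u, hne⟩ : {w : V' // w ≠ u'}) then πy q * p'.2 (u', q.2) else 0) := by
      intro q
      by_cases hq : (q.1 : V') = u
      · rw [resMap_y_pos p' q.1 hq, if_pos (Subtype.ext hq), hq]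
        ring
      · rw [resMap_y_neg p' q.1 hq, if_neg (fun hc => hq (by rw [hc]))]
        ring
    have hsum2 : ∑ q : {w : V' // w ≠ u'} × Fin m, πy q * (resMap u u' p').2 (q.1, q.2)
        = (∑ q : {w : V' // w ≠ u'} × Fin m, πy q * p'.2 (q.1.val, q.2))
          + ∑ i : Fin m, πy (⟨u, hne⟩, i) * p'.2 (u', i) := by
      rw [Finset.sum_congr rfl (fun q _ => hterm q), Finset.sum_add_distrib]
      congr 1
      rw [Fintype.sum_prod_type]
      have hrow : ∀ v : {w : V' // w ≠ u'},
          (∑ i : Fin m, if v = (⟨u, hne⟩ : {w : V' // w ≠ u'})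
              then πy (v, i) * p'.2 (u', i) else 0)
            = if v = (⟨u, hne⟩ : {w : V' // w ≠ u'})
              then ∑ i : Fin m, πy (v, i) * p'.2 (u', i) else 0 := by
        intro v
        by_cases hv : v = (⟨u, hne⟩ : {w : V' // w ≠ u'}) <;> simp [hv]
      rw [Finset.sum_congr rfl (fun v _ => hrow v),
        Finset.sum_ite_eq' Finset.univ (⟨u, hne⟩ : {w : V' // w ≠ u'})
          (fun v => ∑ i : Fin m, πy (v, i) * p'.2 (u', i))]
      simp
    have hyrow : ∑ i : Fin m, πy1 (u', i) * p'.2 (u', i)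
        = ∑ i : Fin m, πy (⟨u, hne⟩, i) * p'.2 (u', i) :=
      Finset.sum_congr rfl fun i _ => by rw [hyu' i]
    have hfinal : ∑ q : {w : V' // w ≠ u'} × Fin m, πy1 (q.1.val, q.2) * p'.2 (q.1.val, q.2)
        = ∑ q : {w : V' // w ≠ u'} × Fin m, πy q * p'.2 (q.1.val, q.2) :=
      Finset.sum_congr rfl fun q _ => by rw [hyv q.1 q.2]
    calc (∑ i : Fin m, πy1 (u', i) * p'.2 (u', i))
          + ∑ q : {w : V' // w ≠ u'} × Fin m, πy1 (q.1.val, q.2) * p'.2 (q.1.val, q.2)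
        = (∑ i : Fin m, πy (⟨u, hne⟩, i) * p'.2 (u', i))
          + ∑ q : {w : V' // w ≠ u'} × Fin m, πy q * p'.2 (q.1.val, q.2) := by
          rw [hyrow, hfinal]
      _ = ∑ q : {w : V' // w ≠ u'} × Fin m, πy q * (resMap u u' p').2 (q.1, q.2) := by
          rw [hsum2]; ring
  have := hx
  linarith [hy]

end Values

section DimLemmas

variable {E : Type*} [AddCommGroup E] [Module ℝ E] [FiniteDimensional ℝ E]

lemma finrank_ker_functional {f : E →ₗ[ℝ] ℝ} (hf0 : f ≠ 0) :
    Module.finrank ℝ (LinearMap.ker f) = Module.finrank ℝ E - 1 := by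
  have hrn := LinearMap.finrank_range_add_finrank_ker f
  have hle : Module.finrank ℝ (LinearMap.range f) ≤ 1 := by
    have := Submodule.finrank_le (LinearMap.range f)
    simpa using this
  have hne0 : Module.finrank ℝ (LinearMap.range f) ≠ 0 := by
    intro h0
    have := Submodule.finrank_eq_zero.1 h0
    rw [LinearMap.range_eq_bot] at this
    exact hf0 this
  omega

lemma face_dim_le {S : Set E} {f : E →ₗ[ℝ] ℝ} {a : ℝ}
    (hf : ∀ p ∈ S, f p = a) (hf0 : f ≠ 0) :
    Module.finrank ℝ (affineSpan ℝ S).direction ≤ Module.finrank ℝ E - 1 := by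
  rcases S.eq_empty_or_nonempty with hS | ⟨p₀, hp₀⟩
  · rw [hS]
    have hb : Module.finrank ℝ (affineSpan ℝ (∅ : Set E)).direction = 0 := by simp
    rw [hb]
    omega
  · have hsub : S ⊆ (AffineSubspace.mk' p₀ (LinearMap.ker f) : Set E) := by
      intro p hp
      rw [AffineSubspace.mem_coe, AffineSubspace.mem_mk', LinearMap.mem_ker,
        vsub_eq_sub, map_sub, hf p hp, hf p₀ hp₀, sub_self]
    have hdir := AffineSubspace.direction_le (affineSpan_le.2 hsub)
    rw [AffineSubspace.direction_mk'] at hdir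
    have := Submodule.finrank_mono hdir
    rw [finrank_ker_functional hf0] at this
    exact this

lemma finrank_dir_image (L : E →ₗ[ℝ] E) (hinv : ∀ x, L (L x) = x) (S : Set E) :
    Module.finrank ℝ (affineSpan ℝ (L '' S)).direction
      = Module.finrank ℝ (affineSpan ℝ S).direction := by
  have hinj : Function.Injective L := fun a b hab => by rw [← hinv a, hab, hinv]
  have h1 := direction_image_le L S (L '' S) subset_rfl
  have h2 := direction_image_le L (L '' S) S (by
    rintro _ ⟨_, ⟨s, hs, rfl⟩, rfl⟩
    rw [hinv]
    exact hs)
  have e1 : Module.finrank ℝ (((affineSpan ℝ S).direction).map L)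
      = Module.finrank ℝ (affineSpan ℝ S).direction :=
    (Submodule.equivMapOfInjective L hinj _).finrank_eq.symm
  have e2 : Module.finrank ℝ (((affineSpan ℝ (L '' S)).direction).map L)
      = Module.finrank ℝ (affineSpan ℝ (L '' S)).direction :=
    (Submodule.equivMapOfInjective L hinj _).finrank_eq.symm
  have le1 := Submodule.finrank_mono h1
  have le2 := Submodule.finrank_mono h2
  omega

end DimLemmas

/-- Lifting a valid/facet-defining inequality of `P = P(G'−u'; C'∖{u'})`
to the polytope `P' = P(G';C')` when `u, u'` are twins in `(G';C')`.
`πx1, πy1` are the coefficient vectors of inequality (16) (coefficient `0` on `x_{u',j}` and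
`π^y_{u,j}` on `y_{u',j}`); `πx2, πy1` give inequality (17) (the `x`-coefficients of `u` and
`u'` swapped). Both are valid for `P'`, and if moreover `G'−u'` is connected with at least 3
vertices, `(G'−u'; C'∖{u'})` is twin free, the original inequality is facet-defining for `P`
and `π₀ ≠ 0`, then (16) and (17) are facet-defining for `P'`. -/
theorem twin_lifting {V' : Type*} [Fintype V'] [DecidableEq V']
    (G' : SimpleGraph V') (C' : Set V')
    (hiso : ∀ v : V', v ∉ C' → ∃ z, G'.Adj v z)
    (u u' : V') (hne : u ≠ u') (htwin : gN G' C' u = gN G' C' u')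
    (m : ℕ) (hm3 : 3 ≤ m)
    (πx πy : ({w : V' // w ≠ u'} × Fin m) → ℝ) (π0 : ℝ)
    (hvalid : ∀ p ∈ poly (delVert G' u') (delSet C' u') m,
      (∑ q, πx q * p.1 q) + (∑ q, πy q * p.2 q) ≤ π0)
    (hnonneg : ∀ j : Fin m, 0 ≤ πx (⟨u, hne⟩, j))
    (πx1 πy1 πx2 : (V' × Fin m) → ℝ)
    (hπx1 : ∀ (v : V') (j : Fin m),
      (v = u' → πx1 (v, j) = 0) ∧ ∀ h : v ≠ u', πx1 (v, j) = πx (⟨v, h⟩, j))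
    (hπy1 : ∀ (v : V') (j : Fin m),
      (v = u' → πy1 (v, j) = πy (⟨u, hne⟩, j)) ∧ ∀ h : v ≠ u', πy1 (v, j) = πy (⟨v, h⟩, j))
    (hπx2 : ∀ (v : V') (j : Fin m),
      (v = u' → πx2 (v, j) = πx (⟨u, hne⟩, j)) ∧ (v = u → πx2 (v, j) = 0) ∧
        ∀ (h1 : v ≠ u') (_ : v ≠ u), πx2 (v, j) = πx (⟨v, h1⟩, j)) :
    ((∀ p ∈ poly G' C' m, (∑ q, πx1 q * p.1 q) + (∑ q, πy1 q * p.2 q) ≤ π0) ∧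
     (∀ p ∈ poly G' C' m, (∑ q, πx2 q * p.1 q) + (∑ q, πy1 q * p.2 q) ≤ π0)) ∧
    (((delVert G' u').Connected ∧ 3 ≤ Fintype.card {w : V' // w ≠ u'} ∧
        TwinFree (delVert G' u') (delSet C' u') ∧
        IsFacet (delVert G' u') (delSet C' u') m
          (fun p => (∑ q, πx q * p.1 q) + (∑ q, πy q * p.2 q)) π0 ∧
        π0 ≠ 0) →
      IsFacet G' C' m (fun p => (∑ q, πx1 q * p.1 q) + (∑ q, πy1 q * p.2 q)) π0 ∧
      IsFacet G' C' m (fun p => (∑ q, πx2 q * p.1 q) + (∑ q, πy1 q * p.2 q)) π0) := by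
  classical
  -- coefficient facts
  have hx1u' : ∀ i : Fin m, πx1 (u', i) = 0 := fun i => (hπx1 u' i).1 rfl
  have hx1v : ∀ (v : {w : V' // w ≠ u'}) (i : Fin m), πx1 (v.val, i) = πx (v, i) :=
    fun v i => (hπx1 v.val i).2 v.2
  have hy1u' : ∀ i : Fin m, πy1 (u', i) = πy (⟨u, hne⟩, i) := fun i => (hπy1 u' i).1 rfl
  have hy1v : ∀ (v : {w : V' // w ≠ u'}) (i : Fin m), πy1 (v.val, i) = πy (v, i) :=
    fun v i => (hπy1 v.val i).2 v.2
  have hx2swap : ∀ (v : V') (i : Fin m), πx1 (Equiv.swap u u' v, i) = πx2 (v, i) := by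
    intro v i
    by_cases hv : v = u
    · rw [hv, Equiv.swap_apply_left, (hπx1 u' i).1 rfl, (hπx2 u i).2.1 rfl]
    · by_cases hv' : v = u'
      · rw [hv', Equiv.swap_apply_right, (hπx1 u i).2 hne, (hπx2 u' i).1 rfl]
      · rw [Equiv.swap_apply_of_ne_of_ne hv hv', (hπx1 v i).2 hv', (hπx2 v i).2.2 hv' hv]
  have hyswap : ∀ (v : V') (i : Fin m), πy1 (Equiv.swap u u' v, i) = πy1 (v, i) := by
    intro v i
    by_cases hv : v = u
    · rw [hv, Equiv.swap_apply_left, (hπy1 u' i).1 rfl, (hπy1 u i).2 hne]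
    · by_cases hv' : v = u'
      · rw [hv', Equiv.swap_apply_right, (hπy1 u i).2 hne, (hπy1 u' i).1 rfl]
      · rw [Equiv.swap_apply_of_ne_of_ne hv hv']
  -- validity of (16)
  have hval16 : ∀ p ∈ poly G' C' m,
      (∑ q, πx1 q * p.1 q) + (∑ q, πy1 q * p.2 q) ≤ π0 := by
    apply valid_hull (pairSum_linear πx1 πy1)
    intro p hp
    have h1 := f_res_le hne hx1u' hx1v hy1u' hy1v hnonneg p
    have h2 := hvalid (resMap u u' p)
      (subset_convexHull ℝ _ (resMap_feasible hne htwin hp))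
    linarith
  -- validity of (17)
  have hval17 : ∀ p ∈ poly G' C' m,
      (∑ q, πx2 q * p.1 q) + (∑ q, πy1 q * p.2 q) ≤ π0 := by
    intro p hp
    have hswap_p : swapMap u u' p ∈ poly G' C' m :=
      mapsto_hull swapMap_linear (fun r hr => swap_feasible hne htwin hr) p hp
    have hle := hval16 _ hswap_p
    rw [f_swap_eq hx2swap hyswap p] at hle
    exact hle
  refine ⟨⟨hval16, hval17⟩, ?_⟩
  rintro ⟨-, hcard, -, ⟨-, hPrank⟩, hπ0⟩
  -- notation
  set SP : Set (Pt {w : V' // w ≠ u'} m) :=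
    {p ∈ poly (delVert G' u') (delSet C' u') m |
      (fun p => (∑ q, πx q * p.1 q) + (∑ q, πy q * p.2 q)) p = π0} with hSP
  set S16 : Set (Pt V' m) :=
    {p ∈ poly G' C' m |
      (fun p => (∑ q, πx1 q * p.1 q) + (∑ q, πy1 q * p.2 q)) p = π0} with hS16
  have hmpos : 0 < m := by omega
  have hcardV' : Fintype.card V' = Fintype.card {w : V' // w ≠ u'} + 1 := by
    have h1 : Fintype.card {w : V' // w ≠ u'} = Fintype.card V' - 1 := by
      simp [Fintype.card_subtype_compl]
    have h2 : 0 < Fintype.card V' := Fintype.card_pos_iff.2 ⟨u'⟩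
    omega
  -- finrank facts
  have hEP : Module.finrank ℝ (Pt {w : V' // w ≠ u'} m)
      = 2 * Fintype.card {w : V' // w ≠ u'} * m := finrank_Pt _ m
  have hEV' : Module.finrank ℝ (Pt V' m) = 2 * Fintype.card V' * m := finrank_Pt _ m
  have h9 : 9 ≤ Fintype.card {w : V' // w ≠ u'} * m := Nat.mul_le_mul hcard hm3
  have h2le : 2 ≤ Module.finrank ℝ (Pt {w : V' // w ≠ u'} m) := by
    rw [hEP]
    have : 2 * Fintype.card {w : V' // w ≠ u'} * m
        = 2 * (Fintype.card {w : V' // w ≠ u'} * m) := by ring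
    omega
  have hPrank2 : Module.finrank ℝ (affineSpan ℝ SP).direction
      = Module.finrank ℝ (Pt {w : V' // w ≠ u'} m) - 1 := by
    rw [hEP]
    exact hPrank
  have hSProot : ∀ p ∈ SP, (IsLinearMap.mk'
      (fun p : Pt {w : V' // w ≠ u'} m => (∑ q, πx q * p.1 q) + (∑ q, πy q * p.2 q))
      (pairSum_linear πx πy)) p = π0 := fun p hp => hp.2
  -- positivity inequalities on the polytope
  have hpoly_x_nonneg : ∀ p ∈ poly (delVert G' u') (delSet C' u') m,
      ∀ q, 0 ≤ p.1 q := by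
    intro p hp q
    have hlin : IsLinearMap ℝ (fun p : Pt {w : V' // w ≠ u'} m => -(p.1 q)) := by
      constructor
      · intro a b; show -((a.1 q) + (b.1 q)) = _; ring
      · intro c a; show -(c * a.1 q) = c • -(a.1 q); rw [smul_eq_mul]; ring
    have := valid_hull hlin (S := Feasible (delVert G' u') (delSet C' u') m) (a := 0)
      (fun r hr => by have := x_nonneg hr q; linarith) p hp
    linarith
  have hpoly_x_mono : ∀ p ∈ poly (delVert G' u') (delSet C' u') m,
      ∀ (w : {w : V' // w ≠ u'}) (i i' : Fin m), i ≤ i' → p.1 (w, i') ≤ p.1 (w, i) := by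
    intro p hp w i i' hle
    have hlin : IsLinearMap ℝ (fun p : Pt {w : V' // w ≠ u'} m => p.1 (w, i') - p.1 (w, i)) := by
      constructor
      · intro a b; show (a.1 (w,i') + b.1 (w,i')) - (a.1 (w,i) + b.1 (w,i)) = _; ring
      · intro c a; show c * a.1 (w,i') - c * a.1 (w,i) = c • (a.1 (w,i') - a.1 (w,i))
        rw [smul_eq_mul]; ring
    have := valid_hull hlin (S := Feasible (delVert G' u') (delSet C' u') m) (a := 0)
      (fun r hr => by have := x_mono hr w hle; linarith) p hp
    linarith
  -- the special root with positive x at u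
  have hlast : m - 1 < m := by omega
  obtain ⟨pstar, hpstar_mem, hpstar⟩ :
      ∃ p ∈ SP, ((LinearMap.proj ((⟨u, hne⟩ : {w : V' // w ≠ u'}), (⟨m - 1, hlast⟩ : Fin m))).comp
        (LinearMap.fst ℝ _ _) : Pt {w : V' // w ≠ u'} m →ₗ[ℝ] ℝ) p ≠ 0 := by
    apply exists_root_ne_zero hπ0 hSProot ?_ h2le hPrank2
    intro h0
    have h1 : ((LinearMap.proj ((⟨u, hne⟩ : {w : V' // w ≠ u'}), (⟨m - 1, hlast⟩ : Fin m))).comp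
        (LinearMap.fst ℝ _ _) : Pt {w : V' // w ≠ u'} m →ₗ[ℝ] ℝ)
        ((fun q => if q = ((⟨u, hne⟩ : {w : V' // w ≠ u'}), (⟨m - 1, hlast⟩ : Fin m))
          then (1:ℝ) else 0, fun _ => (0:ℝ)) : Pt {w : V' // w ≠ u'} m) = 0 := by
      rw [h0]; rfl
    have h2 : (if ((⟨u, hne⟩ : {w : V' // w ≠ u'}), (⟨m - 1, hlast⟩ : Fin m))
        = ((⟨u, hne⟩ : {w : V' // w ≠ u'}), (⟨m - 1, hlast⟩ : Fin m)) then (1:ℝ) else 0) = 0 := h1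
    rw [if_pos rfl] at h2
    norm_num at h2
  have hxs : ∀ i : Fin m, pstar.1 (⟨u, hne⟩, i) ≠ 0 := by
    intro i h0
    apply hpstar
    show pstar.1 (⟨u, hne⟩, ⟨m - 1, hlast⟩) = 0
    have h1 := hpoly_x_mono pstar hpstar_mem.1 ⟨u, hne⟩ i ⟨m - 1, hlast⟩
      (by rw [Fin.le_def]; simp; omega)
    have h2 := hpoly_x_nonneg pstar hpstar_mem.1 (⟨u, hne⟩, (⟨m - 1, hlast⟩ : Fin m))
    rw [h0] at h1
    linarith
  -- roots with positive y at u for each step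
  have hpYex : ∀ j : Fin m, ∃ p ∈ SP, p.2 (⟨u, hne⟩, j) ≠ 0 := by
    intro j
    have := exists_root_ne_zero (g := ((LinearMap.proj ((⟨u, hne⟩ : {w : V' // w ≠ u'}), j)).comp
        (LinearMap.snd ℝ _ _) : Pt {w : V' // w ≠ u'} m →ₗ[ℝ] ℝ)) hπ0 hSProot ?_ h2le hPrank2
    · exact this
    · intro h0
      have h1 : ((LinearMap.proj ((⟨u, hne⟩ : {w : V' // w ≠ u'}), j)).comp
          (LinearMap.snd ℝ _ _) : Pt {w : V' // w ≠ u'} m →ₗ[ℝ] ℝ)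
          ((fun _ => (0:ℝ), fun q => if q = ((⟨u, hne⟩ : {w : V' // w ≠ u'}), j)
            then (1:ℝ) else 0) : Pt {w : V' // w ≠ u'} m) = 0 := by
        rw [h0]; rfl
      have h2 : (if ((⟨u, hne⟩ : {w : V' // w ≠ u'}), j)
          = ((⟨u, hne⟩ : {w : V' // w ≠ u'}), j) then (1:ℝ) else 0) = 0 := h1
      rw [if_pos rfl] at h2
      norm_num at h2
  choose pY hpYmem hpYne using hpYex
  -- face memberships of the lifted points
  have hfaceX : ∀ (j : ℕ) (p : Pt {w : V' // w ≠ u'} m), p ∈ SP →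
      liftX u u' hne j p ∈ S16 := by
    intro j p hp
    refine ⟨?_, ?_⟩
    · exact mapsto_hull (liftX_linear hne j) (fun r hr => liftX_feasible hne htwin hr j) p hp.1
    · show (∑ q, πx1 q * (liftX u u' hne j p).1 q)
          + (∑ q, πy1 q * (liftX u u' hne j p).2 q) = π0
      rw [f_liftX_eq hne j hx1u' hx1v hy1v p]
      exact hp.2
  have hfaceY : ∀ (j : Fin m) (p : Pt {w : V' // w ≠ u'} m), p ∈ SP →
      liftY u u' hne j p ∈ S16 := by
    intro j p hp
    refine ⟨?_, ?_⟩
    · exact mapsto_hull (liftY_linear hne j) (fun r hr => liftY_feasible hne htwin hr j) p hp.1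
    · show (∑ q, πx1 q * (liftY u u' hne j p).1 q)
          + (∑ q, πy1 q * (liftY u u' hne j p).2 q) = π0
      rw [f_liftY_eq hne j hx1v hy1u' hy1v p]
      exact hp.2
  -- the family
  set Nn := Module.finrank ℝ ((affineSpan ℝ SP).direction) with hNn
  set bB := Module.finBasis ℝ ((affineSpan ℝ SP).direction) with hbB
  set Fam : (Fin Nn ⊕ (Fin m ⊕ Fin m)) → Pt V' m :=
    Sum.elim (fun k => liftX u u' hne 0 ((bB k : Pt {w : V' // w ≠ u'} m)))
      (Sum.elim
        (fun j : Fin m => liftX u u' hne (j.1 + 1) pstar - liftX u u' hne 0 pstar)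
        (fun j : Fin m => liftY u u' hne j (pY j) - liftX u u' hne 0 (pY j))) with hFam
  have hL0inj : Function.Injective (liftX u u' hne 0 (m := m) (V' := V')) := by
    intro a b hab
    have := congrArg (resSub u') hab
    rwa [resSub_liftX, resSub_liftX] at this
  -- memberships in the direction of the face
  have hmem : ∀ i, Fam i ∈ (affineSpan ℝ S16).direction := by
    intro i
    cases i with
    | inl k =>
        have himgsub : (IsLinearMap.mk' (liftX u u' hne 0) (liftX_linear hne 0)) '' SP ⊆ S16 := by
          rintro _ ⟨p, hp, rfl⟩
          exact hfaceX 0 p hp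
        have hle := direction_image_le
          (IsLinearMap.mk' (liftX u u' hne 0) (liftX_linear hne 0)) SP S16 himgsub
        exact hle (Submodule.mem_map_of_mem (SetLike.coe_mem (bB k)))
    | inr b =>
        cases b with
        | inl j =>
            have hA := mem_affineSpan ℝ (hfaceX (j.1 + 1) pstar hpstar_mem)
            have hB := mem_affineSpan ℝ (hfaceX 0 pstar hpstar_mem)
            exact AffineSubspace.vsub_mem_direction hA hB
        | inr j =>
            have hA := mem_affineSpan ℝ (hfaceY j (pY j) (hpYmem j))
            have hB := mem_affineSpan ℝ (hfaceX 0 (pY j) (hpYmem j))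
            exact AffineSubspace.vsub_mem_direction hA hB
  -- linear independence of the family
  have hLI : LinearIndependent ℝ Fam := by
    rw [Fintype.linearIndependent_iff]
    intro g hg
    -- step 1 : the y-coefficients vanish
    have hstep1 : ∀ i₀ : Fin m, g (Sum.inr (Sum.inr i₀)) = 0 := by
      intro i₀
      have hform : ∑ i, g i * (Fam i).2 (u', i₀) = 0 := by
        have hc := congrArg
          (⇑(((LinearMap.proj (u', i₀)).comp (LinearMap.snd ℝ _ _) : Pt V' m →ₗ[ℝ] ℝ))) hg
        rw [map_sum, map_zero] at hc
        rw [← hc]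
        exact Finset.sum_congr rfl fun i _ => rfl
      rw [Fintype.sum_sum_type] at hform
      have hz1 : ∑ k : Fin Nn, g (Sum.inl k) * (Fam (Sum.inl k)).2 (u', i₀) = 0 :=
        Finset.sum_eq_zero fun k _ => by
          show g _ * (liftX u u' hne 0 ((bB k : Pt {w : V' // w ≠ u'} m))).2 (u', i₀) = 0
          rw [liftX_y_u', mul_zero]
      rw [hz1, zero_add, Fintype.sum_sum_type] at hform
      have hz2 : ∑ j : Fin m, g (Sum.inr (Sum.inl j))
          * (Fam (Sum.inr (Sum.inl j))).2 (u', i₀) = 0 :=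
        Finset.sum_eq_zero fun j _ => by
          show g _ * ((liftX u u' hne (j.1 + 1) pstar).2 (u', i₀)
            - (liftX u u' hne 0 pstar).2 (u', i₀)) = 0
          rw [liftX_y_u', liftX_y_u', sub_zero, mul_zero]
      rw [hz2, zero_add] at hform
      have hterm : ∀ j : Fin m, g (Sum.inr (Sum.inr j)) * (Fam (Sum.inr (Sum.inr j))).2 (u', i₀)
          = if i₀ = j then g (Sum.inr (Sum.inr j)) * (pY j).2 (⟨u, hne⟩, j) else 0 := by
        intro j
        show g _ * ((liftY u u' hne j (pY j)).2 (u', i₀)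
          - (liftX u u' hne 0 (pY j)).2 (u', i₀)) = _
        rw [liftY_y_u', liftX_y_u', sub_zero]
        split_ifs <;> ring
      rw [Finset.sum_congr rfl (fun j _ => hterm j),
        Finset.sum_ite_eq Finset.univ i₀
          (fun j => g (Sum.inr (Sum.inr j)) * (pY j).2 (⟨u, hne⟩, j))] at hform
      rw [if_pos (Finset.mem_univ i₀)] at hform
      rcases mul_eq_zero.1 hform with h | h
      · exact h
      · exact absurd h (hpYne i₀)
    -- step 2 : the x-coefficients vanish
    have hβ : ∀ i₀ : Fin m, ∑ j ∈ Finset.univ.filter (fun j : Fin m => i₀.1 < j.1 + 1),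
        g (Sum.inr (Sum.inl j)) = 0 := by
      intro i₀
      have hform : ∑ i, g i * (Fam i).1 (u', i₀) = 0 := by
        have hc := congrArg
          (⇑(((LinearMap.proj (u', i₀)).comp (LinearMap.fst ℝ _ _) : Pt V' m →ₗ[ℝ] ℝ))) hg
        rw [map_sum, map_zero] at hc
        rw [← hc]
        exact Finset.sum_congr rfl fun i _ => rfl
      rw [Fintype.sum_sum_type] at hform
      have hz1 : ∑ k : Fin Nn, g (Sum.inl k) * (Fam (Sum.inl k)).1 (u', i₀) = 0 :=
        Finset.sum_eq_zero fun k _ => by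
          show g _ * (liftX u u' hne 0 ((bB k : Pt {w : V' // w ≠ u'} m))).1 (u', i₀) = 0
          rw [liftX_x_u', if_neg (show ¬ (i₀.1 < 0) by omega), mul_zero]
      rw [hz1, zero_add, Fintype.sum_sum_type] at hform
      have hz2 : ∑ j : Fin m, g (Sum.inr (Sum.inr j))
          * (Fam (Sum.inr (Sum.inr j))).1 (u', i₀) = 0 :=
        Finset.sum_eq_zero fun j _ => by
          show g _ * ((liftY u u' hne j (pY j)).1 (u', i₀)
            - (liftX u u' hne 0 (pY j)).1 (u', i₀)) = 0
          rw [liftY_x_u', liftX_x_u', if_neg (show ¬ (i₀.1 < 0) by omega), sub_zero, mul_zero]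
      rw [hz2, add_zero] at hform
      have hterm : ∀ j : Fin m, g (Sum.inr (Sum.inl j)) * (Fam (Sum.inr (Sum.inl j))).1 (u', i₀)
          = if i₀.1 < j.1 + 1 then g (Sum.inr (Sum.inl j)) * pstar.1 (⟨u, hne⟩, i₀) else 0 := by
        intro j
        show g _ * ((liftX u u' hne (j.1 + 1) pstar).1 (u', i₀)
          - (liftX u u' hne 0 pstar).1 (u', i₀)) = _
        rw [liftX_x_u', liftX_x_u', if_neg (show ¬ (i₀.1 < 0) by omega), sub_zero]
        split_ifs <;> ring
      rw [Finset.sum_congr rfl (fun j _ => hterm j), ← Finset.sum_filter,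
        ← Finset.sum_mul] at hform
      rcases mul_eq_zero.1 hform with h | h
      · exact h
      · exact absurd h (hxs i₀)
    have hstep2 : ∀ i₀ : Fin m, g (Sum.inr (Sum.inl i₀)) = 0 := by
      intro i₀
      have hsplit : Finset.univ.filter (fun j : Fin m => i₀.1 < j.1 + 1)
          = insert i₀ (Finset.univ.filter (fun j : Fin m => i₀.1 < j.1)) := by
        ext j
        simp [Fin.ext_iff]
        omega
      have hnotmem : i₀ ∉ Finset.univ.filter (fun j : Fin m => i₀.1 < j.1) := by simp
      have h1 := hβ i₀
      rw [hsplit, Finset.sum_insert hnotmem] at h1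
      have h2 : ∑ j ∈ Finset.univ.filter (fun j : Fin m => i₀.1 < j.1),
          g (Sum.inr (Sum.inl j)) = 0 := by
        by_cases hl : i₀.1 + 1 < m
        · have hcong : Finset.univ.filter (fun j : Fin m => i₀.1 < j.1)
              = Finset.univ.filter (fun j : Fin m => (⟨i₀.1 + 1, hl⟩ : Fin m).1 < j.1 + 1) := by
            ext j
            simp only [Finset.mem_filter, Finset.mem_univ, true_and]
            omega
          rw [hcong]
          exact hβ ⟨i₀.1 + 1, hl⟩
        · have hemp : Finset.univ.filter (fun j : Fin m => i₀.1 < j.1) = ∅ := by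
            apply Finset.filter_false_of_mem
            intro j _
            have := j.2
            omega
          rw [hemp, Finset.sum_empty]
      rw [h2, add_zero] at h1
      exact h1
    -- step 3 : the basis coefficients vanish
    have hg' : ∑ k : Fin Nn, g (Sum.inl k)
        • liftX u u' hne 0 ((bB k : Pt {w : V' // w ≠ u'} m)) = 0 := by
      rw [Fintype.sum_sum_type] at hg
      have hz : ∑ b : Fin m ⊕ Fin m, g (Sum.inr b) • Fam (Sum.inr b) = 0 :=
        Finset.sum_eq_zero fun b _ => by
          cases b with
          | inl j => rw [hstep2 j, zero_smul]
          | inr j => rw [hstep1 j, zero_smul]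
      rw [hz, add_zero] at hg
      exact hg
    have hres2 : ∑ k : Fin Nn, g (Sum.inl k) • ((bB k : Pt {w : V' // w ≠ u'} m)) = 0 := by
      have hpt : ∀ k : Fin Nn, (IsLinearMap.mk' (resSub u') resSub_linear)
          (g (Sum.inl k) • liftX u u' hne 0 ((bB k : Pt {w : V' // w ≠ u'} m)))
            = g (Sum.inl k) • ((bB k : Pt {w : V' // w ≠ u'} m)) := by
        intro k
        rw [map_smul]
        congr 1
        show resSub u' (liftX u u' hne 0 _) = _
        rw [resSub_liftX]
      calc ∑ k : Fin Nn, g (Sum.inl k) • ((bB k : Pt {w : V' // w ≠ u'} m))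
          = ∑ k : Fin Nn, (IsLinearMap.mk' (resSub u') resSub_linear)
              (g (Sum.inl k) • liftX u u' hne 0 ((bB k : Pt {w : V' // w ≠ u'} m))) :=
            Finset.sum_congr rfl fun k _ => (hpt k).symm
        _ = (IsLinearMap.mk' (resSub u') resSub_linear)
              (∑ k : Fin Nn, g (Sum.inl k)
                • liftX u u' hne 0 ((bB k : Pt {w : V' // w ≠ u'} m))) := (map_sum _ _ _).symm
        _ = 0 := by rw [hg', map_zero]
    have hliB : LinearIndependent ℝ
        (fun k : Fin Nn => ((bB k : Pt {w : V' // w ≠ u'} m))) :=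
      (bB.linearIndependent).map' ((affineSpan ℝ SP).direction).subtype
        (Submodule.ker_subtype _)
    have hinl := Fintype.linearIndependent_iff.1 hliB (fun k => g (Sum.inl k)) hres2
    intro i
    cases i with
    | inl k => exact hinl k
    | inr b =>
        cases b with
        | inl j => exact hstep2 j
        | inr j => exact hstep1 j
  -- lower bound on the dimension of the face of (16)
  have hLI' : LinearIndependent ℝ
      (fun i => (⟨Fam i, hmem i⟩ : (affineSpan ℝ S16).direction)) := by
    apply LinearIndependent.of_comp ((affineSpan ℝ S16).direction).subtype
    exact hLI
  have hlow : Nn + (m + m) ≤ Module.finrank ℝ (affineSpan ℝ S16).direction := by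
    have := hLI'.fintype_card_le_finrank
    simpa using this
  -- upper bound
  have hf16ne : (IsLinearMap.mk'
      (fun p : Pt V' m => (∑ q, πx1 q * p.1 q) + (∑ q, πy1 q * p.2 q))
      (pairSum_linear πx1 πy1)) ≠ 0 := by
    intro h0
    have hv := (hfaceX 0 pstar hpstar_mem).2
    have hz : (∑ q, πx1 q * (liftX u u' hne 0 pstar).1 q)
        + (∑ q, πy1 q * (liftX u u' hne 0 pstar).2 q) = 0 := by
      have := congrArg (fun f : Pt V' m →ₗ[ℝ] ℝ => f (liftX u u' hne 0 pstar)) h0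
      simpa using this
    exact hπ0 (hv.symm.trans hz)
  have hup : Module.finrank ℝ (affineSpan ℝ S16).direction
      ≤ 2 * Fintype.card V' * m - 1 := by
    have := face_dim_le (S := S16) (a := π0) (fun p hp => hp.2) hf16ne
    rwa [hEV'] at this
  -- conclude dimension for (16)
  have hdim16 : Module.finrank ℝ (affineSpan ℝ S16).direction
      = 2 * Fintype.card V' * m - 1 := by
    have hNval : Nn = 2 * Fintype.card {w : V' // w ≠ u'} * m - 1 := hPrank
    obtain ⟨K, hK⟩ : ∃ K, K = Fintype.card {w : V' // w ≠ u'} * m :=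
      ⟨Fintype.card {w : V' // w ≠ u'} * m, rfl⟩
    have e1 : 2 * Fintype.card {w : V' // w ≠ u'} * m = 2 * K := by rw [hK]; ring
    have e2 : 2 * Fintype.card V' * m = 2 * K + 2 * m := by rw [hK, hcardV']; ring
    rw [e1] at hNval
    rw [e2] at hup ⊢
    rw [← hK] at h9
    omega
  -- facet of (16)
  have hfacet16 : IsFacet G' C' m
      (fun p => (∑ q, πx1 q * p.1 q) + (∑ q, πy1 q * p.2 q)) π0 := ⟨hval16, hdim16⟩
  refine ⟨hfacet16, ?_⟩
  -- facet of (17) via the swap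
  have hsetswap : {p ∈ poly G' C' m |
      (fun p => (∑ q, πx2 q * p.1 q) + (∑ q, πy1 q * p.2 q)) p = π0}
      = swapMap u u' '' S16 := by
    ext p
    simp only [Set.mem_image, Set.mem_setOf_eq]
    constructor
    · rintro ⟨hp, hv⟩
      refine ⟨swapMap u u' p, ⟨?_, ?_⟩, swapMap_involutive p⟩
      · exact mapsto_hull swapMap_linear (fun r hr => swap_feasible hne htwin hr) p hp
      · show (∑ q, πx1 q * (swapMap u u' p).1 q) + (∑ q, πy1 q * (swapMap u u' p).2 q) = π0
        rw [f_swap_eq hx2swap hyswap p]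
        exact hv
    · rintro ⟨r, ⟨hr, hrv⟩, rfl⟩
      refine ⟨mapsto_hull swapMap_linear (fun s hs => swap_feasible hne htwin hs) r hr, ?_⟩
      show (∑ q, πx2 q * (swapMap u u' r).1 q) + (∑ q, πy1 q * (swapMap u u' r).2 q) = π0
      have h1 := f_swap_eq (πx1 := πx1) (πx2 := πx2) (πy1 := πy1) hx2swap hyswap (swapMap u u' r)
      rw [swapMap_involutive r] at h1
      rw [← h1]
      exact hrv
  refine ⟨hval17, ?_⟩
  rw [hsetswap]
  have hinv : ∀ x : Pt V' m, (IsLinearMap.mk' (swapMap u u') swapMap_linear)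
      ((IsLinearMap.mk' (swapMap u u') swapMap_linear) x) = x := fun x => swapMap_involutive x
  have := finrank_dir_image (IsLinearMap.mk' (swapMap u u') swapMap_linear) hinv S16
  rw [show (IsLinearMap.mk' (swapMap u u') swapMap_linear) '' S16 = swapMap u u' '' S16 from rfl]
    at this
  rw [this]
  exact hdim16

end LegalSeq
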